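/- arXiv:2005.11083 — 3 statements merged into one kernel-verified Lean document; each statement's English description precedes it below -/
import Mathlib

section
/- Let (M,φ,g) be a 2k-dimensional anti-paraKähler manifold and (TM,g_BS) its tangent bundle with the Berger type deformed Sasaki metric. A vector field ξ on M, regarded as a smooth map ξ : (M,g) → (TM,g_BS), is an isometric immersion if and only if ∇ξ = 0, where ∇ is the Levi-Civita connection of g. -/
/-!
A local-coordinate formalization (in a global chart `ℝⁿ`, `n = 2k`) of the
geometry of the tangent bundle of an anti-paraKähler manifold `(M, φ, g)`
endowed with the Berger type deformed Sasaki metric `g_BS`.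
-/

open scoped BigOperators
open Matrix

namespace BergerSasaki

variable {n : ℕ}

/-- Partial derivative `∂/∂xⁱ` of a real function on the chart `ℝⁿ`. -/
noncomputable def pd (i : Fin n) (f : (Fin n → ℝ) → ℝ) (x : Fin n → ℝ) : ℝ :=
  fderiv ℝ f x (Pi.single i 1)

/-- The local data of an almost anti-paraHermitian manifold in a global chart `ℝⁿ`:
a Riemannian metric `g` and an almost paracomplex structure `phi` (`phi ∘ phi = id`;
the two eigenbundles for the eigenvalues `±1` have the same rank, i.e. `phi` is
trace free), such that `g(phi X, phi Y) = g(X , Y)`. -/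
structure PreData (n : ℕ) where
  g : (Fin n → ℝ) → Matrix (Fin n) (Fin n) ℝ
  phi : (Fin n → ℝ) → Matrix (Fin n) (Fin n) ℝ
  g_smooth : ∀ i j, ContDiff ℝ (⊤ : ℕ∞) fun x => g x i j
  phi_smooth : ∀ i j, ContDiff ℝ (⊤ : ℕ∞) fun x => phi x i j
  g_symm : ∀ x, (g x).IsSymm
  g_posdef : ∀ x, (g x).PosDef
  phi_sq : ∀ x, phi x * phi x = 1
  phi_trace : ∀ x, (phi x).trace = 0
  compat : ∀ x, (phi x)ᵀ * g x * phi x = g x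

/-- Christoffel symbols `Γ^h_{ij}` of the Levi-Civita connection `∇` of `D.g`. -/
noncomputable def Gamma (D : PreData n) (x : Fin n → ℝ) (i j h : Fin n) : ℝ :=
  (1 / 2) * ∑ l, (D.g x)⁻¹ h l *
    (pd i (fun y => D.g y j l) x + pd j (fun y => D.g y i l) x - pd l (fun y => D.g y i j) x)

/-- Local components `R_{ijl}{}^h` of the Riemann curvature tensor of `∇`. -/
noncomputable def Riem (D : PreData n) (x : Fin n → ℝ) (i j l h : Fin n) : ℝ :=
  pd i (fun y => Gamma D y j l h) x - pd j (fun y => Gamma D y i l h) x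
    + ∑ m, Gamma D x j l m * Gamma D x i m h - ∑ m, Gamma D x i l m * Gamma D x j m h

/-- The anti-paraKähler condition `∇ φ = 0`, in local components. -/
def IsAntiParaKahler (D : PreData n) : Prop :=
  ∀ x i j h,
    pd i (fun y => D.phi y h j) x + ∑ m, Gamma D x i m h * D.phi x m j
      - ∑ m, Gamma D x i j m * D.phi x h m = 0

/-- Points of the induced chart of the tangent bundle `TM`: a pair
`(x, u)` of a base point and a fibre coordinate. -/
abbrev TMpt (n : ℕ) := (Fin n → ℝ) × (Fin n → ℝ)

/-- Index set for the induced coordinates on `TM`: `Sum.inl i ↔ xⁱ`, `Sum.inr i ↔ uⁱ`. -/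
abbrev Idx (n : ℕ) := Fin n ⊕ Fin n

/-- Natural components of a point/vector of the tangent bundle chart. -/
def comp (p : TMpt n) : Idx n → ℝ := Sum.elim p.1 p.2

/-- The natural coordinate basis vectors of the tangent bundle chart. -/
noncomputable def ebase (a : Idx n) : TMpt n :=
  Sum.elim (fun i => (Pi.single i 1, 0)) (fun i => (0, Pi.single i 1)) a

/-- Partial derivatives on the tangent bundle chart. -/
noncomputable def pdT (a : Idx n) (f : TMpt n → ℝ) (p : TMpt n) : ℝ :=
  fderiv ℝ f p (ebase a)

/-- `Γ_{i0}{}^h = u^m Γ^h_{im}` (the index `0` denotes contraction with `u`). -/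
noncomputable def Gamma0 (D : PreData n) (p : TMpt n) (i h : Fin n) : ℝ :=
  ∑ m, Gamma D p.1 i m h * p.2 m

/-- Natural components of the adapted frame: `aframe D (Sum.inl i)` is the horizontal
frame field `E_i = ∂/∂xⁱ - Γ_{i0}{}^h ∂/∂u^h`, and `aframe D (Sum.inr i)` is the
vertical frame field `E_ī = ∂/∂uⁱ`. -/
noncomputable def aframe (D : PreData n) (a : Idx n) (p : TMpt n) : Idx n → ℝ :=
  Sum.elim
    (fun i => Sum.elim (fun h => if h = i then (1 : ℝ) else 0) (fun h => - Gamma0 D p i h))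
    (fun i => Sum.elim (fun _ => (0 : ℝ)) (fun h => if h = i then 1 else 0)) a

/-- The matrix expressing adapted components in terms of natural components
(the inverse of the frame matrix of `aframe`). -/
noncomputable def Bmat (D : PreData n) (p : TMpt n) : Matrix (Idx n) (Idx n) ℝ :=
  fun a b =>
    Sum.elim
      (fun h => Sum.elim (fun i => if h = i then (1 : ℝ) else 0) (fun _ => 0) b)
      (fun h => Sum.elim (fun i => Gamma0 D p i h) (fun i => if h = i then 1 else 0) b) a

/-- The lowered vector `w_i = φ^m_i g_{m0}`, i.e. `g(∂_i, φ u)`. -/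
noncomputable def wvec (D : PreData n) (p : TMpt n) (i : Fin n) : ℝ :=
  ∑ m, D.phi p.1 m i * (∑ l, D.g p.1 m l * p.2 l)

/-- The Berger type deformed Sasaki metric in the adapted frame:
block diagonal with blocks `g_{ij}` and `g_{ij} + δ² g(∂_i, φu) g(∂_j, φu)`. -/
noncomputable def gBSad (D : PreData n) (δ : ℝ) (p : TMpt n) : Matrix (Idx n) (Idx n) ℝ :=
  fun a b =>
    Sum.elim
      (fun i => Sum.elim (fun j => D.g p.1 i j) (fun _ => (0 : ℝ)) b)
      (fun i => Sum.elim (fun _ => (0 : ℝ))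
        (fun j => D.g p.1 i j + δ ^ 2 * wvec D p i * wvec D p j) b) a

/-- The Berger type deformed Sasaki metric `g_BS` in the natural coordinates of `TM`. -/
noncomputable def gBS (D : PreData n) (δ : ℝ) (p : TMpt n) : Matrix (Idx n) (Idx n) ℝ :=
  (Bmat D p)ᵀ * gBSad D δ p * Bmat D p

/-- The Sasaki metric `g_S` in the natural coordinates of `TM` (the case `δ = 0`). -/
noncomputable def gS (D : PreData n) (p : TMpt n) : Matrix (Idx n) (Idx n) ℝ :=
  gBS D 0 p

/-- Christoffel symbols of (the Levi-Civita connection of) a metric `G` on the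
tangent bundle chart, in natural coordinates. -/
noncomputable def GammaT (G : TMpt n → Matrix (Idx n) (Idx n) ℝ) (p : TMpt n)
    (a b c : Idx n) : ℝ :=
  (1 / 2) * ∑ d, (G p)⁻¹ c d *
    (pdT a (fun q => G q b d) p + pdT b (fun q => G q a d) p - pdT d (fun q => G q a b) p)

/-- Covariant derivative (w.r.t. the Levi-Civita connection of `G`) of a vector field `Y`
on `TM` in the direction of a vector field `X`, in natural components. -/
noncomputable def covT (G : TMpt n → Matrix (Idx n) (Idx n) ℝ)
    (X Y : TMpt n → Idx n → ℝ) (p : TMpt n) (c : Idx n) : ℝ :=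
  ∑ a, X p a * pdT a (fun q => Y q c) p + ∑ a, ∑ b, GammaT G p a b c * X p a * Y p b

/-- `R^{h·}_{·jki} = R_{ljk}{}^s g^{lh} g_{si}`. -/
noncomputable def Rup (D : PreData n) (x : Fin n → ℝ) (j k i h : Fin n) : ℝ :=
  ∑ l, ∑ s, Riem D x l j k s * (D.g x)⁻¹ l h * D.g x s i

/-- `R^{h·}_{·j0i} = R_{lj0}{}^s g^{lh} g_{si}`, the index `0` contracted with `u`. -/
noncomputable def Rstar (D : PreData n) (x u : Fin n → ℝ) (j i h : Fin n) : ℝ :=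
  ∑ l, ∑ s, (∑ m, Riem D x l j m s * u m) * (D.g x)⁻¹ l h * D.g x s i

/-- Second fundamental form (formula (5)), in natural coordinates, of a map `f` from the
tangent bundle chart (source metric `G`) to the base chart, with target Christoffel
symbols `Γt`. -/
noncomputable def betaTM2M (G : TMpt n → Matrix (Idx n) (Idx n) ℝ)
    (Γt : (Fin n → ℝ) → Fin n → Fin n → Fin n → ℝ) (f : TMpt n → Fin n → ℝ)
    (p : TMpt n) (a b : Idx n) (h : Fin n) : ℝ :=
  pdT a (fun q => pdT b (fun r => f r h) q) p
    - ∑ c, GammaT G p a b c * pdT c (fun r => f r h) p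
    + ∑ i, ∑ j, Γt (f p) i j h * pdT a (fun r => f r i) p * pdT b (fun r => f r j) p

/-- Second fundamental form of a map `f` of the base chart to itself, with source
metric `Gsrc.g` and target Christoffel symbols `Γt`. -/
noncomputable def betaM2M (Gsrc : PreData n)
    (Γt : (Fin n → ℝ) → Fin n → Fin n → Fin n → ℝ) (f : (Fin n → ℝ) → Fin n → ℝ)
    (x : Fin n → ℝ) (i j h : Fin n) : ℝ :=
  pd i (fun y => pd j (fun z => f z h) y) x
    - ∑ m, Gamma Gsrc x i j m * pd m (fun z => f z h) x
    + ∑ a, ∑ b, Γt (f x) a b h * pd i (fun z => f z a) x * pd j (fun z => f z b) x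

/-- Natural components of the map `ξ : M → TM`, `x ↦ (x, ξ(x))`, determined by a
vector field `ξ` on `M`. -/
def ximap (ξ : (Fin n → ℝ) → Fin n → ℝ) (x : Fin n → ℝ) : Idx n → ℝ :=
  Sum.elim x (ξ x)

/-- A vector field `ξ`, regarded as the map `ξ : (M, g) → (TM, g_BS)`, is an isometric
immersion: the pullback of `g_BS` under `x ↦ (x, ξ(x))` equals `g`. -/
def IsIsometricImmersion (D : PreData n) (δ : ℝ) (ξ : (Fin n → ℝ) → Fin n → ℝ) : Prop :=
  ∀ x i j, (∑ a, ∑ b, pd i (fun y => ximap ξ y a) x * pd j (fun y => ximap ξ y b) x *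
      gBS D δ (x, ξ x) a b) = D.g x i j

/-- Covariant derivative `∇_i ξ^h` of a vector field. -/
noncomputable def nabla (D : PreData n) (ξ : (Fin n → ℝ) → Fin n → ℝ)
    (x : Fin n → ℝ) (i h : Fin n) : ℝ :=
  pd i (fun y => ξ y h) x + ∑ m, Gamma D x i m h * ξ x m

/-- Second covariant derivative `∇_i ∇_j ξ^h` of a vector field. -/
noncomputable def nabla2 (D : PreData n) (ξ : (Fin n → ℝ) → Fin n → ℝ)
    (x : Fin n → ℝ) (i j h : Fin n) : ℝ :=
  pd i (fun y => nabla D ξ y j h) x + ∑ m, Gamma D x i m h * nabla D ξ x j m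
    - ∑ m, Gamma D x i j m * nabla D ξ x m h

/-- The coefficient `A^h_{mn} = (δ²/(1+δ²)) φ^k_n φ^h_0 g_{mk}` (index `0` contracted
with the fibre coordinate `u`). -/
noncomputable def Acoef (D : PreData n) (δ : ℝ) (x u : Fin n → ℝ) (m nn h : Fin n) : ℝ :=
  δ ^ 2 / (1 + δ ^ 2) * ∑ l, D.phi x l nn * (∑ r, D.phi x h r * u r) * D.g x m l

/-- Second fundamental form of the map `ξ : (M, g) → (TM, g_BS)`, `x ↦ (x, ξ(x))`,
in natural components. -/
noncomputable def betaM2TM (D : PreData n) (δ : ℝ) (ξ : (Fin n → ℝ) → Fin n → ℝ)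
    (x : Fin n → ℝ) (i j : Fin n) (c : Idx n) : ℝ :=
  pd i (fun y => pd j (fun z => ximap ξ z c) y) x
    - ∑ m, Gamma D x i j m * pd m (fun z => ximap ξ z c) x
    + ∑ a, ∑ b, GammaT (gBS D δ) (x, ξ x) a b c *
        pd i (fun z => ximap ξ z a) x * pd j (fun z => ximap ξ z b) x

/-- Second fundamental form, in natural coordinates, of a map `f : TM → TM`, the source
carrying a metric `G` and the target a (torsion-free) linear connection with
coefficients `Γt`. -/
noncomputable def betaTM2TM (G : TMpt n → Matrix (Idx n) (Idx n) ℝ)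
    (Γt : TMpt n → Idx n → Idx n → Idx n → ℝ) (f : TMpt n → TMpt n)
    (p : TMpt n) (a b c : Idx n) : ℝ :=
  pdT a (fun q => pdT b (fun r => comp (f r) c) q) p
    - ∑ d, GammaT G p a b d * pdT d (fun r => comp (f r) c) p
    + ∑ d, ∑ e, Γt (f p) d e c *
        pdT a (fun r => comp (f r) d) p * pdT b (fun r => comp (f r) e) p

/-- Horizontal projection (w.r.t. the horizontal distribution of `∇`) of a tangent
vector of `TM`, in natural components. -/
noncomputable def hproj (D : PreData n) (p : TMpt n) (v : Idx n → ℝ) : Idx n → ℝ :=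
  fun c => ∑ i, v (Sum.inl i) * aframe D (Sum.inl i) p c

/-- Vertical projection of a tangent vector of `TM`, in natural components. -/
noncomputable def vproj (D : PreData n) (p : TMpt n) (v : Idx n → ℝ) : Idx n → ℝ :=
  fun c => v c - hproj D p v c

/-- The Schouten-Van Kampen connection associated with the Levi-Civita connection of
`g_BS`:  `∇̃_X Y = V(∇_X (V Y)) + H(∇_X (H Y))`. -/
noncomputable def svk (D : PreData n) (δ : ℝ) (X Y : TMpt n → Idx n → ℝ)
    (p : TMpt n) (c : Idx n) : ℝ :=
  vproj D p (covT (gBS D δ) X (fun q => vproj D q (Y q)) p) c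
    + hproj D p (covT (gBS D δ) X (fun q => hproj D q (Y q)) p) c

/-- Lie bracket of vector fields on the tangent bundle chart, in natural components. -/
noncomputable def lieBracketT (X Y : TMpt n → Idx n → ℝ) (p : TMpt n) (c : Idx n) : ℝ :=
  ∑ a, X p a * pdT a (fun q => Y q c) p - ∑ a, Y p a * pdT a (fun q => X q c) p

/-- Torsion tensor `T(X,Y) = ∇_X Y - ∇_Y X - [X,Y]` of a connection (given as an
operator on vector fields) on the tangent bundle chart. -/
noncomputable def torsionOf
    (Conn : (TMpt n → Idx n → ℝ) → (TMpt n → Idx n → ℝ) → TMpt n → Idx n → ℝ)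
    (X Y : TMpt n → Idx n → ℝ) (p : TMpt n) (c : Idx n) : ℝ :=
  Conn X Y p c - Conn Y X p c - lieBracketT X Y p c

/-- The mean connection `∇ᵐ = ∇̃ - ½ T` of the Schouten-Van Kampen connection `∇̃`. -/
noncomputable def meanConn (D : PreData n) (δ : ℝ) (X Y : TMpt n → Idx n → ℝ)
    (p : TMpt n) (c : Idx n) : ℝ :=
  svk D δ X Y p c - (1 / 2) * torsionOf (svk D δ) X Y p c

/-- The constant coordinate vector field `∂/∂x^a` on the tangent bundle chart. -/
def natE (a : Idx n) : TMpt n → Idx n → ℝ := fun _ c => if c = a then 1 else 0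

end BergerSasaki
namespace BergerSasaki

variable {n : ℕ}

lemma pd_coord (i h : Fin n) (x : Fin n → ℝ) :
    pd i (fun y : Fin n → ℝ => y h) x = if h = i then 1 else 0 := by
  have : (fun y : Fin n → ℝ => y h) =
      fun y => (ContinuousLinearMap.proj h : (Fin n → ℝ) →L[ℝ] ℝ) y := rfl
  rw [pd, this, ContinuousLinearMap.fderiv]
  simp [Pi.single_apply]

lemma pullback_eq (D : PreData n) (δ : ℝ) (ξ : (Fin n → ℝ) → Fin n → ℝ)
    (x : Fin n → ℝ) (i j : Fin n) :
    (∑ a, ∑ b, pd i (fun y => ximap ξ y a) x * pd j (fun y => ximap ξ y b) x *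
      gBS D δ (x, ξ x) a b)
    = D.g x i j + ∑ h, ∑ k, nabla D ξ x i h * nabla D ξ x j k *
        (D.g x h k + δ ^ 2 * wvec D (x, ξ x) h * wvec D (x, ξ x) k) := by
  set p : TMpt n := (x, ξ x) with hp
  set V : Fin n → Idx n → ℝ := fun i a => pd i (fun y => ximap ξ y a) x with hV
  have hv : ∀ (i : Fin n) (a : Idx n), V i a =
      Sum.elim (fun h => if h = i then (1:ℝ) else 0) (fun h => pd i (fun y => ξ y h) x) a := by
    intro i a
    cases a with
    | inl h => exact pd_coord i h x
    | inr h => rfl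
  set u : Fin n → Idx n → ℝ := fun i =>
    Sum.elim (fun h => if h = i then (1:ℝ) else 0) (fun h => nabla D ξ x i h) with hu
  have hU : ∀ i : Fin n, Bmat D p *ᵥ V i = u i := by
    intro i
    funext c
    cases c with
    | inl h =>
      simp [Matrix.mulVec, dotProduct, Bmat, Fintype.sum_sum_type, hv,
        Finset.sum_ite_eq, Finset.sum_ite_eq', hu]
    | inr h =>
      simp [Matrix.mulVec, dotProduct, Bmat, Fintype.sum_sum_type, hv,
        Finset.sum_ite_eq, Finset.sum_ite_eq', nabla, Gamma0, hp, add_comm, hu]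
  have step1 : (∑ a, ∑ b, V i a * V j b * gBS D δ p a b)
      = V i ⬝ᵥ (gBS D δ p *ᵥ V j) := by
    rw [dotProduct]
    refine Finset.sum_congr rfl fun a _ => ?_
    rw [Matrix.mulVec, dotProduct, Finset.mul_sum]
    exact Finset.sum_congr rfl fun b _ => by ring
  have step2 : V i ⬝ᵥ (gBS D δ p *ᵥ V j) = u i ⬝ᵥ (gBSad D δ p *ᵥ u j) := by
    rw [gBS, ← Matrix.mulVec_mulVec, ← Matrix.mulVec_mulVec,
      Matrix.dotProduct_mulVec, Matrix.vecMul_transpose, hU, hU]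
  rw [step1, step2]
  simp only [dotProduct, Matrix.mulVec, hu, Fintype.sum_sum_type,
    Sum.elim_inl, Sum.elim_inr, gBSad]
  simp [Finset.sum_ite_eq, Finset.sum_ite_eq', ite_mul, mul_ite, Finset.mul_sum]
  congr 1
  exact Finset.sum_congr rfl fun h _ => Finset.sum_congr rfl fun k _ => by ring

/-- A vector field `ξ` on `M`, regarded as the map
`ξ : (M, g) → (TM, g_BS)`, `x ↦ (x, ξ(x))`, is an isometric immersion if and only if
`∇ ξ = 0`. -/
theorem xi_isometricImmersion_iff_parallel (k : ℕ) (D : PreData (2 * k))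
    (hD : IsAntiParaKahler D) (δ : ℝ) (ξ : (Fin (2 * k) → ℝ) → Fin (2 * k) → ℝ)
    (hξ : ∀ h, ContDiff ℝ (⊤ : ℕ∞) fun x => ξ x h) :
    IsIsometricImmersion D δ ξ ↔ ∀ (x : Fin (2 * k) → ℝ) (i h : Fin (2 * k)),
      nabla D ξ x i h = 0 := by
  constructor
  · intro H x i h
    have key := H x i i
    rw [pullback_eq] at key
    set N : Fin (2 * k) → ℝ := fun h => nabla D ξ x i h with hN
    set w : Fin (2 * k) → ℝ := fun h => wvec D (x, ξ x) h with hw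
    have hq : (∑ h, ∑ kk, N h * N kk * (D.g x h kk + δ ^ 2 * w h * w kk)) = 0 := by
      linarith [key]
    set s : ℝ := ∑ h, N h * w h with hs
    have hsplit : (∑ h, ∑ kk, N h * N kk * (D.g x h kk + δ ^ 2 * w h * w kk))
        = N ⬝ᵥ (D.g x *ᵥ N) + δ ^ 2 * (s * s) := by
      have e2 : δ ^ 2 * (s * s) = ∑ h, ∑ kk, N h * N kk * (δ ^ 2 * w h * w kk) := by
        rw [hs, Finset.sum_mul_sum, Finset.mul_sum]
        refine Finset.sum_congr rfl fun a _ => ?_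
        rw [Finset.mul_sum]
        exact Finset.sum_congr rfl fun b _ => by ring
      have e1 : N ⬝ᵥ (D.g x *ᵥ N) = ∑ h, ∑ kk, N h * N kk * D.g x h kk := by
        rw [dotProduct]
        refine Finset.sum_congr rfl fun a _ => ?_
        rw [Matrix.mulVec, dotProduct, Finset.mul_sum]
        exact Finset.sum_congr rfl fun b _ => by ring
      rw [e1, e2, ← Finset.sum_add_distrib]
      refine Finset.sum_congr rfl fun a _ => ?_
      rw [← Finset.sum_add_distrib]
      exact Finset.sum_congr rfl fun b _ => by ring
    have h1 : 0 ≤ N ⬝ᵥ (D.g x *ᵥ N) := by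
      have := (D.g_posdef x).posSemidef.dotProduct_mulVec_nonneg N
      simpa using this
    have h2 : 0 ≤ δ ^ 2 * (s * s) := mul_nonneg (sq_nonneg δ) (mul_self_nonneg s)
    have hNg : N ⬝ᵥ (D.g x *ᵥ N) = 0 := by
      rw [hsplit] at hq; linarith
    have hN0 : N = 0 := by
      by_contra hne
      have := (D.g_posdef x).dotProduct_mulVec_pos hne
      rw [show (star N : Fin (2*k) → ℝ) = N from rfl] at this
      exact absurd hNg (by simpa using this.ne')
    exact congrFun hN0 h
  · intro H x i j
    rw [pullback_eq]
    simp [H]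


end BergerSasaki
end

section
/- Let (M,φ,g) be a 2k-dimensional anti-paraKähler manifold and (TM,g_BS) its tangent bundle with the Berger type deformed Sasaki metric. If a vector field ξ on M, regarded as a map ξ : (M,g) → (TM,g_BS), is an isometric immersion, then ξ is a totally geodesic map; furthermore, ξ is harmonic. -/
/-!
A local-coordinate formalization (in a global chart `ℝⁿ`, `n = 2k`) of the
geometry of the tangent bundle of an anti-paraKähler manifold `(M, φ, g)`
endowed with the Berger type deformed Sasaki metric `g_BS`.
-/

open scoped BigOperators
open Matrix

namespace BergerSasakiAux

open Matrix

variable {E : Type*} [NormedAddCommGroup E] [NormedSpace ℝ E]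

lemma one_le_itop : (1 : WithTop ℕ∞) ≤ ((⊤:ℕ∞) : WithTop ℕ∞) := by
  rw [show ((1:WithTop ℕ∞)) = ((1:ℕ∞):WithTop ℕ∞) by norm_cast]
  exact WithTop.coe_le_coe.mpr le_top

lemma two_le_itop : (2 : WithTop ℕ∞) ≤ ((⊤:ℕ∞) : WithTop ℕ∞) := by
  rw [show ((2:WithTop ℕ∞)) = ((2:ℕ∞):WithTop ℕ∞) by norm_cast]
  exact WithTop.coe_le_coe.mpr le_top

lemma cd_diff {F : Type*} [NormedAddCommGroup F] [NormedSpace ℝ F] {f : E → F}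
    (h : ContDiff ℝ (⊤:ℕ∞) f) : Differentiable ℝ f := h.differentiable (by simp)

lemma cd_fderiv_apply {f : E → ℝ} (h : ContDiff ℝ (⊤:ℕ∞) f) (v : E) :
    ContDiff ℝ (⊤:ℕ∞) fun x => fderiv ℝ f x v := by
  have h1 : ContDiff ℝ (⊤:ℕ∞) (fderiv ℝ f) := h.fderiv_right (by exact_mod_cast le_top)
  exact h1.clm_apply contDiff_const

lemma dapply_const (c : ℝ) (x v : E) : fderiv ℝ (fun _ : E => c) x v = 0 := by
  simp

lemma dapply_sum {ι : Type*} (s : Finset ι) (F : ι → E → ℝ) (x v : E)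
    (hF : ∀ m ∈ s, DifferentiableAt ℝ (F m) x) :
    fderiv ℝ (fun y => ∑ m ∈ s, F m y) x v = ∑ m ∈ s, fderiv ℝ (F m) x v := by
  rw [fderiv_fun_sum hF]; simp

lemma dapply_mul {f g : E → ℝ} (x v : E) (hf : DifferentiableAt ℝ f x)
    (hg : DifferentiableAt ℝ g x) :
    fderiv ℝ (fun y => f y * g y) x v = f x * fderiv ℝ g x v + g x * fderiv ℝ f x v := by
  rw [fderiv_fun_mul hf hg]; simp

lemma dapply_mul3 {f g h : E → ℝ} (x v : E) (hf : DifferentiableAt ℝ f x)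
    (hg : DifferentiableAt ℝ g x) (hh : DifferentiableAt ℝ h x) :
    fderiv ℝ (fun y => f y * g y * h y) x v =
      fderiv ℝ f x v * g x * h x + f x * fderiv ℝ g x v * h x + f x * g x * fderiv ℝ h x v := by
  rw [dapply_mul (f := fun y => f y * g y) x v (hf.mul hg) hh, dapply_mul x v hf hg]
  ring

lemma schwarz {f : E → ℝ} (h : ContDiff ℝ (⊤:ℕ∞) f) (x v w : E) :
    fderiv ℝ (fun y => fderiv ℝ f y v) x w = fderiv ℝ (fun y => fderiv ℝ f y w) x v := by
  have hd : ContDiff ℝ (⊤:ℕ∞) (fderiv ℝ f) := h.fderiv_right (by exact_mod_cast le_top)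
  have hs : IsSymmSndFDerivAt ℝ f x := h.contDiffAt.isSymmSndFDerivAt (by simpa using two_le_itop)
  have e : ∀ u : E, fderiv ℝ (fun y => fderiv ℝ f y u) x = (fderiv ℝ (fderiv ℝ f) x).flip u := by
    intro u
    rw [show (fun y => fderiv ℝ f y u) = fun y => (fderiv ℝ f y) u from rfl,
      fderiv_clm_apply ((cd_diff hd) x) (differentiableAt_const u)]
    simp
  rw [e v, e w]
  simp only [ContinuousLinearMap.flip_apply]
  exact hs w v

lemma cd_finset_prod {ι : Type*} (s : Finset ι) (F : ι → E → ℝ)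
    (hF : ∀ m ∈ s, ContDiff ℝ (⊤:ℕ∞) (F m)) : ContDiff ℝ (⊤:ℕ∞) fun x => ∏ m ∈ s, F m x := by
  classical
  induction s using Finset.cons_induction with
  | empty => simpa using contDiff_const
  | cons a s ha ih =>
      simp only [Finset.prod_cons]
      exact (hF a (by simp)).mul (ih fun m hm => hF m (by simp [hm]))

lemma cd_det {ι : Type*} [Fintype ι] [DecidableEq ι] (M : E → Matrix ι ι ℝ)
    (hM : ∀ i j, ContDiff ℝ (⊤:ℕ∞) fun x => M x i j) :
    ContDiff ℝ (⊤:ℕ∞) fun x => (M x).det := by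
  simp only [Matrix.det_apply']
  apply ContDiff.sum
  intro σ _
  have : ContDiff ℝ (⊤:ℕ∞) fun x => ∏ i, M x (σ i) i :=
    cd_finset_prod _ _ fun m _ => hM (σ m) m
  exact contDiff_const.mul this

lemma cd_inv_entry {ι : Type*} [Fintype ι] [DecidableEq ι] (M : E → Matrix ι ι ℝ)
    (hM : ∀ i j, ContDiff ℝ (⊤:ℕ∞) fun x => M x i j)
    (hdet : ∀ x, (M x).det ≠ 0) (i j : ι) :
    ContDiff ℝ (⊤:ℕ∞) fun x => (M x)⁻¹ i j := by
  have e : (fun x => (M x)⁻¹ i j) = fun x => ((M x).det)⁻¹ * (M x).adjugate i j := by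
    funext x
    rw [Matrix.inv_def]
    simp [Ring.inverse_eq_inv']
  rw [e]
  refine ((cd_det M hM).inv hdet).mul ?_
  have e2 : (fun x => (M x).adjugate i j) = fun x => ((M x).updateRow j (Pi.single i 1)).det := by
    funext x; rw [Matrix.adjugate_apply]
  rw [e2]
  apply cd_det
  intro a b
  by_cases hab : a = j
  · subst hab; simp only [Matrix.updateRow_apply, if_pos rfl]; exact contDiff_const
  · simp only [Matrix.updateRow_apply, if_neg hab]; exact hM a b

lemma quad_eq {ι : Type*} [Fintype ι] (M : Matrix ι ι ℝ) (u v : ι → ℝ) :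
    ∑ a, ∑ b, u a * v b * M a b = u ⬝ᵥ M *ᵥ v := by
  simp only [dotProduct, Matrix.mulVec, Finset.mul_sum]
  exact Finset.sum_congr rfl fun a _ => Finset.sum_congr rfl fun b _ => by ring

end BergerSasakiAux

namespace BergerSasaki2Aux
open BergerSasakiAux BergerSasaki Matrix

variable {n : ℕ} (D : PreData n) (δ : ℝ)

lemma gdet_ne (x : Fin n → ℝ) : (D.g x).det ≠ 0 := (D.g_posdef x).det_pos.ne'

lemma cd_ginv (i j : Fin n) : ContDiff ℝ (⊤:ℕ∞) fun x => (D.g x)⁻¹ i j :=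
  cd_inv_entry D.g D.g_smooth (gdet_ne D) i j

lemma cd_pd_g (i j l : Fin n) : ContDiff ℝ (⊤:ℕ∞) fun x => pd i (fun y => D.g y j l) x :=
  cd_fderiv_apply (D.g_smooth j l) _

lemma cd_Gamma (i j h : Fin n) : ContDiff ℝ (⊤:ℕ∞) fun x => Gamma D x i j h := by
  unfold Gamma
  apply ContDiff.mul contDiff_const
  apply ContDiff.sum; intro l _
  exact (cd_ginv D h l).mul (((cd_pd_g D i j l).add (cd_pd_g D j i l)).sub (cd_pd_g D l i j))

lemma cd_snd_app (m : Fin n) : ContDiff ℝ (⊤:ℕ∞) fun p : TMpt n => p.2 m :=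
  (ContinuousLinearMap.proj m : ((Fin n → ℝ)) →L[ℝ] ℝ).contDiff.comp contDiff_snd

lemma cd_fst_comp {f : (Fin n → ℝ) → ℝ} (hf : ContDiff ℝ (⊤:ℕ∞) f) :
    ContDiff ℝ (⊤:ℕ∞) fun p : TMpt n => f p.1 := hf.comp contDiff_fst

lemma cd_Gamma0 (i h : Fin n) : ContDiff ℝ (⊤:ℕ∞) fun p : TMpt n => Gamma0 D p i h := by
  unfold Gamma0
  apply ContDiff.sum; intro m _
  exact (cd_fst_comp (cd_Gamma D i m h)).mul (cd_snd_app m)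

lemma cd_wvec (i : Fin n) : ContDiff ℝ (⊤:ℕ∞) fun p : TMpt n => wvec D p i := by
  unfold wvec
  apply ContDiff.sum; intro m _
  refine (cd_fst_comp (D.phi_smooth m i)).mul ?_
  apply ContDiff.sum; intro l _
  exact (cd_fst_comp (D.g_smooth m l)).mul (cd_snd_app l)

lemma cd_gBSad (a b : Idx n) : ContDiff ℝ (⊤:ℕ∞) fun p : TMpt n => gBSad D δ p a b := by
  rcases a with i | i <;> rcases b with j | j <;>
    simp only [gBSad, Sum.elim_inl, Sum.elim_inr]
  · exact cd_fst_comp (D.g_smooth i j)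
  · exact contDiff_const
  · exact contDiff_const
  · exact (cd_fst_comp (D.g_smooth i j)).add
      ((contDiff_const.mul (cd_wvec D i)).mul (cd_wvec D j))

lemma cd_Bmat (a b : Idx n) : ContDiff ℝ (⊤:ℕ∞) fun p : TMpt n => Bmat D p a b := by
  rcases a with i | i <;> rcases b with j | j <;>
    simp only [Bmat, Sum.elim_inl, Sum.elim_inr]
  · exact contDiff_const
  · exact contDiff_const
  · exact cd_Gamma0 D j i
  · exact contDiff_const

lemma cd_gBS (a b : Idx n) : ContDiff ℝ (⊤:ℕ∞) fun p : TMpt n => gBS D δ p a b := by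
  have e : (fun p : TMpt n => gBS D δ p a b)
      = fun p => ∑ c, (∑ e, Bmat D p e a * gBSad D δ p e c) * Bmat D p c b := by
    funext p
    simp [gBS, Matrix.mul_apply, Matrix.transpose_apply]
  rw [e]
  apply ContDiff.sum; intro c _
  exact (ContDiff.sum fun e _ => (cd_Bmat D e a).mul (cd_gBSad D δ e c)).mul (cd_Bmat D c b)

/-- `gBS` contracted with two vectors, rewritten through the adapted frame. -/
lemma gBS_quad (p : TMpt n) (u v : Idx n → ℝ) :
    ∑ a, ∑ b, u a * v b * gBS D δ p a b
      = ∑ c, ∑ e, (Bmat D p *ᵥ u) c * (Bmat D p *ᵥ v) e * gBSad D δ p c e := by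
  rw [quad_eq, quad_eq, gBS, Matrix.mul_assoc, ← Matrix.mulVec_mulVec, ← Matrix.mulVec_mulVec,
    Matrix.dotProduct_mulVec, Matrix.vecMul_transpose]

lemma gBSad_quad (p : TMpt n) (f1 g1 f2 g2 : Fin n → ℝ) :
    ∑ c, ∑ e, (Sum.elim f1 g1 c) * (Sum.elim f2 g2 e) * gBSad D δ p c e
      = (∑ h, ∑ m, f1 h * f2 m * D.g p.1 h m)
        + ∑ h, ∑ m, g1 h * g2 m * (D.g p.1 h m + δ^2 * wvec D p h * wvec D p m) := by
  rw [Fintype.sum_sum_type]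
  congr 1
  · apply Finset.sum_congr rfl; intro h _
    rw [Fintype.sum_sum_type]
    simp [gBSad]
  · apply Finset.sum_congr rfl; intro h _
    rw [Fintype.sum_sum_type]
    simp [gBSad]

lemma pd_proj (i h : Fin n) (x : Fin n → ℝ) :
    pd i (fun y : Fin n → ℝ => y h) x = if h = i then 1 else 0 := by
  have e : fderiv ℝ (fun y : Fin n → ℝ => y h) x = ContinuousLinearMap.proj h :=
    (ContinuousLinearMap.proj h : ((Fin n → ℝ)) →L[ℝ] ℝ).fderiv
  unfold pd
  rw [e]
  simp [Pi.single_apply]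


noncomputable def Jvec (ξ : (Fin n → ℝ) → Fin n → ℝ) (x : Fin n → ℝ) (m : Fin n) :
    Idx n → ℝ := fun a => pd m (fun z => ximap ξ z a) x

lemma Jvec_inl (ξ : (Fin n → ℝ) → Fin n → ℝ) (x : Fin n → ℝ) (m h : Fin n) :
    Jvec ξ x m (Sum.inl h) = if h = m then 1 else 0 := by
  have e : (fun z : Fin n → ℝ => ximap ξ z (Sum.inl h)) = fun z => z h := rfl
  rw [Jvec, e, pd_proj]

lemma Jvec_inr (ξ : (Fin n → ℝ) → Fin n → ℝ) (x : Fin n → ℝ) (m h : Fin n) :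
    Jvec ξ x m (Sum.inr h) = pd m (fun z => ξ z h) x := rfl

lemma BJvec (ξ : (Fin n → ℝ) → Fin n → ℝ) (x : Fin n → ℝ) (m : Fin n) :
    Bmat D (x, ξ x) *ᵥ Jvec ξ x m
      = Sum.elim (fun h => if h = m then 1 else 0) (fun h => nabla D ξ x m h) := by
  funext a
  rcases a with h | h
  · simp [Matrix.mulVec, dotProduct, Fintype.sum_sum_type, Bmat, Jvec_inl, Jvec_inr,
      ite_mul, mul_ite]
  · simp only [Matrix.mulVec, dotProduct, Fintype.sum_sum_type, Bmat, Jvec_inl, Jvec_inr,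
      Sum.elim_inl, Sum.elim_inr, mul_ite, mul_one, mul_zero, Finset.sum_ite_eq,
      Finset.mem_univ, if_true]
    simp only [nabla, Gamma0]
    rw [Finset.sum_ite_eq' Finset.univ m]
    simp only [Finset.mem_univ, if_true, ite_mul, one_mul, zero_mul, Finset.sum_ite_eq]
    ring

lemma Bframe (p : TMpt n) (c : Idx n) :
    Bmat D p *ᵥ (fun b => aframe D c p b)
      = fun a => if a = c then (1:ℝ) else 0 := by
  funext a
  rcases c with i | i <;> rcases a with h | h <;>
    simp [Matrix.mulVec, dotProduct, Fintype.sum_sum_type, Bmat, aframe,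
      ite_mul, mul_ite, Sum.inl.injEq, Sum.inr.injEq]

/-- Quadratic positivity of the adapted-frame metric. -/
lemma gBSad_quadpos (p : TMpt n) (v : Idx n → ℝ) (hv : v ≠ 0) :
    0 < ∑ a, ∑ b, v a * v b * gBSad D δ p a b := by
  have hv' : v = Sum.elim (fun h => v (Sum.inl h)) (fun h => v (Sum.inr h)) := by
    funext a; rcases a with h | h <;> rfl
  rw [hv', gBSad_quad]
  set vH : Fin n → ℝ := fun h => v (Sum.inl h)
  set vV : Fin n → ℝ := fun h => v (Sum.inr h)
  have key2 : ∑ h, ∑ m, vV h * vV m * (D.g p.1 h m + δ^2 * wvec D p h * wvec D p m)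
      = vV ⬝ᵥ D.g p.1 *ᵥ vV + δ^2 * (∑ h, vV h * wvec D p h) * (∑ m, vV m * wvec D p m) := by
    have e1 : δ ^ 2 * (∑ h, vV h * wvec D p h) * (∑ m, vV m * wvec D p m)
        = ∑ h, ∑ m, δ ^ 2 * (vV h * wvec D p h) * (vV m * wvec D p m) := by
      rw [mul_assoc, Finset.sum_mul_sum, Finset.mul_sum]
      exact Finset.sum_congr rfl fun h _ => by
        rw [Finset.mul_sum]; exact Finset.sum_congr rfl fun m _ => by ring
    rw [← quad_eq, e1, ← Finset.sum_add_distrib]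
    refine Finset.sum_congr rfl fun h _ => ?_
    rw [← Finset.sum_add_distrib]
    exact Finset.sum_congr rfl fun m _ => by ring
  rw [quad_eq, key2]
  have hgH : 0 ≤ vH ⬝ᵥ D.g p.1 *ᵥ vH := by
    have := (D.g_posdef p.1).posSemidef.dotProduct_mulVec_nonneg vH; simpa using this
  have hgV : 0 ≤ vV ⬝ᵥ D.g p.1 *ᵥ vV := by
    have := (D.g_posdef p.1).posSemidef.dotProduct_mulVec_nonneg vV; simpa using this
  have hw : 0 ≤ δ^2 * (∑ h, vV h * wvec D p h) * (∑ m, vV m * wvec D p m) := by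
    rw [mul_assoc]
    exact mul_nonneg (sq_nonneg δ) (mul_self_nonneg _)
  rcases (by
      by_contra hcon
      push_neg at hcon
      apply hv
      funext a
      rcases a with h | h
      · exact congrFun hcon.1 h
      · exact congrFun hcon.2 h : vH ≠ 0 ∨ vV ≠ 0) with h0 | h0
  · have : 0 < vH ⬝ᵥ D.g p.1 *ᵥ vH := by
      have := (D.g_posdef p.1).dotProduct_mulVec_pos h0; simpa using this
    linarith
  · have : 0 < vV ⬝ᵥ D.g p.1 *ᵥ vV := by
      have := (D.g_posdef p.1).dotProduct_mulVec_pos h0; simpa using this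
    linarith

lemma gBSad_det_ne (p : TMpt n) : (gBSad D δ p).det ≠ 0 := by
  intro h0
  obtain ⟨v, hv, hMv⟩ := (Matrix.exists_mulVec_eq_zero_iff).2 h0
  have := gBSad_quadpos D δ p v hv
  rw [quad_eq, hMv] at this
  simp at this

lemma Bmat_mul_frame (p : TMpt n) :
    Bmat D p * (Matrix.of fun a c => aframe D c p a) = 1 := by
  ext a c
  have := congrFun (Bframe D p c) a
  simp only [Matrix.mulVec, dotProduct] at this
  rw [Matrix.mul_apply, Matrix.one_apply]
  simpa using this

lemma Bmat_det_isUnit (p : TMpt n) : IsUnit (Bmat D p).det := by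
  have h := congrArg Matrix.det (Bmat_mul_frame D p)
  rw [Matrix.det_mul, Matrix.det_one] at h
  exact ⟨⟨_, _, h, by rw [mul_comm]; exact h⟩, rfl⟩

lemma gBS_det_ne (p : TMpt n) : (gBS D δ p).det ≠ 0 := by
  rw [gBS, Matrix.det_mul, Matrix.det_mul, Matrix.det_transpose]
  have h1 := (Bmat_det_isUnit D p).ne_zero
  have h2 := gBSad_det_ne D δ p
  exact mul_ne_zero (mul_ne_zero h1 h2) h1

lemma gBS_det_isUnit (p : TMpt n) : IsUnit (gBS D δ p).det :=
  (gBS_det_ne D δ p).isUnit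

lemma gBSad_symm (p : TMpt n) : (gBSad D δ p)ᵀ = gBSad D δ p := by
  ext a b
  have hg : ∀ i j, D.g p.1 i j = D.g p.1 j i := by
    intro i j
    have := congrFun (congrFun (D.g_symm p.1) j) i
    simpa [Matrix.transpose_apply] using this
  rcases a with i | i <;> rcases b with j | j <;>
    simp only [Matrix.transpose_apply, gBSad, Sum.elim_inl, Sum.elim_inr]
  · exact hg j i
  · rw [hg j i]; ring

lemma gBS_symm_mat (p : TMpt n) : (gBS D δ p)ᵀ = gBS D δ p := by
  rw [gBS, Matrix.transpose_mul, Matrix.transpose_mul, Matrix.transpose_transpose,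
    gBSad_symm, Matrix.mul_assoc]

lemma gBS_symm (p : TMpt n) (a b : Idx n) : gBS D δ p a b = gBS D δ p b a := by
  conv_lhs => rw [← gBS_symm_mat D δ p]
  rw [Matrix.transpose_apply]

end BergerSasaki2Aux

namespace MoreAux
open BergerSasakiAux BergerSasaki BergerSasaki2Aux Matrix

variable {n : ℕ} (D : PreData n) (δ : ℝ) (ξ : (Fin n → ℝ) → Fin n → ℝ)

lemma expand_block (p : TMpt n) (N1 N2 : Fin n → ℝ) :
    ∑ h, ∑ m, N1 h * N2 m * (D.g p.1 h m + δ^2 * wvec D p h * wvec D p m)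
      = (∑ h, ∑ m, N1 h * N2 m * D.g p.1 h m)
        + δ^2 * (∑ h, N1 h * wvec D p h) * (∑ m, N2 m * wvec D p m) := by
  have e1 : δ ^ 2 * (∑ h, N1 h * wvec D p h) * (∑ m, N2 m * wvec D p m)
      = ∑ h, ∑ m, δ ^ 2 * (N1 h * wvec D p h) * (N2 m * wvec D p m) := by
    rw [mul_assoc, Finset.sum_mul_sum, Finset.mul_sum]
    exact Finset.sum_congr rfl fun h _ => by
      rw [Finset.mul_sum]; exact Finset.sum_congr rfl fun m _ => by ring
  rw [e1, ← Finset.sum_add_distrib]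
  refine Finset.sum_congr rfl fun h _ => ?_
  rw [← Finset.sum_add_distrib]
  exact Finset.sum_congr rfl fun m _ => by ring

lemma indicator_to_elim (j : Fin n) :
    (fun a : Idx n => if a = Sum.inl j then (1:ℝ) else 0)
      = Sum.elim (fun h => if h = j then (1:ℝ) else 0) (fun _ => (0:ℝ)) := by
  funext a
  rcases a with h | h <;> simp

lemma pullback_formula (x : Fin n → ℝ) (i j : Fin n) :
    ∑ a, ∑ b, Jvec ξ x i a * Jvec ξ x j b * gBS D δ (x, ξ x) a b
      = D.g x i j
        + ((∑ h, ∑ m, nabla D ξ x i h * nabla D ξ x j m * D.g x h m)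
          + δ^2 * (∑ h, nabla D ξ x i h * wvec D (x, ξ x) h)
              * (∑ m, nabla D ξ x j m * wvec D (x, ξ x) m)) := by
  rw [gBS_quad, BJvec, BJvec, gBSad_quad, expand_block]
  congr 1
  simp [ite_mul, Finset.sum_ite_eq']

lemma nabla_zero (hiso : IsIsometricImmersion D δ ξ) (x : Fin n → ℝ) (m h : Fin n) :
    nabla D ξ x m h = 0 := by
  have hx := hiso x m m
  have e : (∑ a, ∑ b, pd m (fun y => ximap ξ y a) x * pd m (fun y => ximap ξ y b) x
        * gBS D δ (x, ξ x) a b)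
      = ∑ a, ∑ b, Jvec ξ x m a * Jvec ξ x m b * gBS D δ (x, ξ x) a b := rfl
  rw [e, pullback_formula] at hx
  have hq : (∑ h, ∑ m', nabla D ξ x m h * nabla D ξ x m m' * D.g x h m')
      + δ^2 * (∑ h, nabla D ξ x m h * wvec D (x, ξ x) h)
          * (∑ m', nabla D ξ x m m' * wvec D (x, ξ x) m') = 0 := by linarith
  have h2 : 0 ≤ δ^2 * (∑ h, nabla D ξ x m h * wvec D (x, ξ x) h)
      * (∑ m', nabla D ξ x m m' * wvec D (x, ξ x) m') := by
    rw [mul_assoc]; exact mul_nonneg (sq_nonneg δ) (mul_self_nonneg _)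
  have h1 : (∑ h, ∑ m', nabla D ξ x m h * nabla D ξ x m m' * D.g x h m')
      = (fun h => nabla D ξ x m h) ⬝ᵥ D.g x *ᵥ (fun h => nabla D ξ x m h) := by
    rw [← quad_eq]
  have hNz : (fun h => nabla D ξ x m h) = 0 := by
    by_contra h0
    have hpos := (D.g_posdef x).dotProduct_mulVec_pos h0
    simp only [star_trivial] at hpos
    rw [h1] at hq
    linarith
  exact congrFun hNz h

/-- The horizontal frame vectors contracted against `gBS` recover the base metric /
vanish against vertical directions. -/
lemma H_contract (p : TMpt n) (j : Fin n) (d : Idx n) :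
    ∑ b, aframe D (Sum.inl j) p b * gBS D δ p b d
      = Sum.elim (fun m => D.g p.1 j m) (fun _ => (0:ℝ)) d := by
  have e : ∑ b, aframe D (Sum.inl j) p b * gBS D δ p b d
      = ∑ b, ∑ a, aframe D (Sum.inl j) p b
          * (fun a : Idx n => if a = d then (1:ℝ) else 0) a * gBS D δ p b a := by
    refine Finset.sum_congr rfl fun b _ => ?_
    rw [Finset.sum_eq_single d]
    · simp
    · intro a _ ha; simp [ha]
    · intro hd; exact absurd (Finset.mem_univ d) hd
  rw [e, gBS_quad, Bframe, indicator_to_elim]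
  have hBcol : (Bmat D p *ᵥ fun a : Idx n => if a = d then (1:ℝ) else 0)
      = fun a => Bmat D p a d := by
    funext a
    simp only [Matrix.mulVec, dotProduct, mul_ite, mul_one, mul_zero]
    rw [Finset.sum_ite_eq' Finset.univ d]
    simp
  rw [hBcol]
  rcases d with m | m
  · have ecol : (fun a : Idx n => Bmat D p a (Sum.inl m))
        = Sum.elim (fun h => if h = m then (1:ℝ) else 0) (fun h => Gamma0 D p m h) := by
      funext a; rcases a with h | h <;> simp [Bmat]
    rw [ecol, gBSad_quad]
    simp [ite_mul, Finset.sum_ite_eq']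
  · have ecol : (fun a : Idx n => Bmat D p a (Sum.inr m))
        = Sum.elim (fun _ => (0:ℝ)) (fun h => if h = m then (1:ℝ) else 0) := by
      funext a; rcases a with h | h <;> simp [Bmat]
    rw [ecol, gBSad_quad]
    simp [ite_mul, Finset.sum_ite_eq']

/-- Horizontal lifts recover the base metric. -/
lemma HH_contract (p : TMpt n) (i j : Fin n) :
    ∑ a, ∑ b, aframe D (Sum.inl i) p a * aframe D (Sum.inl j) p b * gBS D δ p a b
      = D.g p.1 i j := by
  rw [gBS_quad, Bframe, Bframe, indicator_to_elim, indicator_to_elim, gBSad_quad]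
  simp [ite_mul, Finset.sum_ite_eq']


lemma cd_aframeH (i : Fin n) (a : Idx n) :
    ContDiff ℝ (⊤:ℕ∞) fun q : TMpt n => aframe D (Sum.inl i) q a := by
  rcases a with h | h
  · exact contDiff_const
  · exact (cd_Gamma0 D i h).neg

lemma vec_decomp (v : TMpt n) : v = ∑ a : Idx n, BergerSasaki.comp v a • ebase a := by
  have h1 : ∀ (w : Fin n → ℝ), ∑ i, w i • (Pi.single i (1:ℝ) : Fin n → ℝ) = w := by
    intro w
    funext t
    rw [Finset.sum_apply]
    simp [Pi.single_apply, mul_ite]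
  rw [Fintype.sum_sum_type]
  apply Prod.ext
  · rw [Prod.fst_add, Prod.fst_sum, Prod.fst_sum]
    simp only [ebase, BergerSasaki.comp, Sum.elim_inl, Sum.elim_inr, Prod.smul_mk]
    simp [h1]
  · rw [Prod.snd_add, Prod.snd_sum, Prod.snd_sum]
    simp only [ebase, BergerSasaki.comp, Sum.elim_inl, Sum.elim_inr, Prod.smul_mk]
    simp [h1]

lemma clm_decomp (L : TMpt n →L[ℝ] ℝ) (v : TMpt n) :
    L v = ∑ a : Idx n, BergerSasaki.comp v a * L (ebase a) := by
  conv_lhs => rw [vec_decomp v]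
  rw [map_sum]
  exact Finset.sum_congr rfl fun a _ => by rw [L.map_smul, smul_eq_mul]

lemma contract_chain (hξ : ∀ h, ContDiff ℝ (⊤:ℕ∞) fun x => ξ x h)
    {f : TMpt n → ℝ} (hf : ContDiff ℝ (⊤:ℕ∞) f) (x : Fin n → ℝ) (i : Fin n) :
    ∑ a, Jvec ξ x i a * pdT a f (x, ξ x) = pd i (fun y => f (y, ξ y)) x := by
  have hxid : DifferentiableAt ℝ (fun y : Fin n → ℝ => ξ y) x :=
    (cd_diff (contDiff_pi.mpr hξ)) x
  have hcomp : pd i (fun y => f (y, ξ y)) x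
      = fderiv ℝ f (x, ξ x)
          ((Pi.single i 1 : Fin n → ℝ), fderiv ℝ (fun y : Fin n → ℝ => ξ y) x (Pi.single i 1)) := by
    unfold pd
    rw [show (fun y => f (y, ξ y)) = f ∘ (fun y => (y, ξ y)) from rfl,
      fderiv_comp x ((cd_diff hf) _) (differentiableAt_fun_id.prodMk hxid)]
    rw [ContinuousLinearMap.coe_comp', Function.comp_apply]
    congr 1
    rw [DifferentiableAt.fderiv_prodMk differentiableAt_fun_id hxid]
    rw [ContinuousLinearMap.prod_apply]
    rw [fderiv_id']
    rfl
  have compv : ∀ a : Idx n, BergerSasaki.comp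
      ((Pi.single i 1 : Fin n → ℝ), fderiv ℝ (fun y : Fin n → ℝ => ξ y) x (Pi.single i 1)) a
      = Jvec ξ x i a := by
    intro a
    rcases a with h | h
    · rw [Jvec_inl]
      show (Pi.single i (1:ℝ) : Fin n → ℝ) h = _
      rw [Pi.single_apply]
    · rw [Jvec_inr]
      show fderiv ℝ (fun y : Fin n → ℝ => ξ y) x (Pi.single i 1) h = _
      rw [show (fun y : Fin n → ℝ => ξ y) = fun y h => ξ y h from rfl,
        fderiv_pi (fun h => (cd_diff (hξ h)) x)]
      rfl
  rw [hcomp, clm_decomp]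
  exact Finset.sum_congr rfl fun a _ => by rw [compv a]; rfl

lemma pdT_fst_inl {f : (Fin n → ℝ) → ℝ} (hf : ContDiff ℝ (⊤:ℕ∞) f) (p : TMpt n) (m : Fin n) :
    pdT (Sum.inl m) (fun q : TMpt n => f q.1) p = pd m f p.1 := by
  unfold pdT pd
  rw [show (fun q : TMpt n => f q.1) = f ∘ Prod.fst from rfl,
    fderiv_comp p ((cd_diff hf) _) differentiableAt_fst]
  rw [ContinuousLinearMap.coe_comp', Function.comp_apply, fderiv_fst]
  rfl

lemma pdT_fst_inr {f : (Fin n → ℝ) → ℝ} (hf : ContDiff ℝ (⊤:ℕ∞) f) (p : TMpt n) (m : Fin n) :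
    pdT (Sum.inr m) (fun q : TMpt n => f q.1) p = 0 := by
  unfold pdT
  rw [show (fun q : TMpt n => f q.1) = f ∘ Prod.fst from rfl,
    fderiv_comp p ((cd_diff hf) _) differentiableAt_fst]
  rw [ContinuousLinearMap.coe_comp', Function.comp_apply, fderiv_fst]
  show fderiv ℝ f p.1 0 = 0
  exact (fderiv ℝ f p.1).map_zero

lemma frame_deriv (p : TMpt n) (d : Idx n) (i j : Fin n) :
    ∑ a, ∑ b, aframe D (Sum.inl i) p a * aframe D (Sum.inl j) p b
        * pdT d (fun q => gBS D δ q a b) p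
      = pdT d (fun q => D.g q.1 i j) p := by
  have hfun : (fun q : TMpt n => D.g q.1 i j)
      = fun q => ∑ a, ∑ b, aframe D (Sum.inl i) q a * aframe D (Sum.inl j) q b
          * gBS D δ q a b := by
    funext q; rw [HH_contract]
  rw [hfun]
  unfold pdT
  have hdab : ∀ (a b : Idx n), DifferentiableAt ℝ
      (fun q : TMpt n => aframe D (Sum.inl i) q a * aframe D (Sum.inl j) q b * gBS D δ q a b)
      p := fun a b =>
    (cd_diff (((cd_aframeH D i a).mul (cd_aframeH D j b)).mul (cd_gBS D δ a b))) p
  have hda : ∀ a : Idx n, DifferentiableAt ℝ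
      (fun q : TMpt n => ∑ b, aframe D (Sum.inl i) q a * aframe D (Sum.inl j) q b
        * gBS D δ q a b) p := fun a =>
    (cd_diff (ContDiff.sum fun b _ =>
      ((cd_aframeH D i a).mul (cd_aframeH D j b)).mul (cd_gBS D δ a b))) p
  have step : fderiv ℝ (fun q => ∑ a, ∑ b, aframe D (Sum.inl i) q a
        * aframe D (Sum.inl j) q b * gBS D δ q a b) p (ebase d)
      = ∑ a, ∑ b,
          (fderiv ℝ (fun q => aframe D (Sum.inl i) q a) p (ebase d)
              * aframe D (Sum.inl j) p b * gBS D δ p a b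
            + aframe D (Sum.inl i) p a
              * fderiv ℝ (fun q => aframe D (Sum.inl j) q b) p (ebase d) * gBS D δ p a b
            + aframe D (Sum.inl i) p a * aframe D (Sum.inl j) p b
              * fderiv ℝ (fun q => gBS D δ q a b) p (ebase d)) := by
    rw [dapply_sum _ _ _ _ fun a _ => hda a]
    refine Finset.sum_congr rfl fun a _ => ?_
    rw [dapply_sum _ _ _ _ fun b _ => hdab a b]
    refine Finset.sum_congr rfl fun b _ => ?_
    exact dapply_mul3 p (ebase d) ((cd_diff (cd_aframeH D i a)) p)
      ((cd_diff (cd_aframeH D j b)) p) ((cd_diff (cd_gBS D δ a b)) p)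
  have v1 : ∑ a, ∑ b, fderiv ℝ (fun q => aframe D (Sum.inl i) q a) p (ebase d)
        * aframe D (Sum.inl j) p b * gBS D δ p a b = 0 := by
    rw [Fintype.sum_sum_type]
    have z1 : ∀ h : Fin n, ∑ b, fderiv ℝ (fun q => aframe D (Sum.inl i) q (Sum.inl h)) p (ebase d)
        * aframe D (Sum.inl j) p b * gBS D δ p (Sum.inl h) b = 0 := by
      intro h
      refine Finset.sum_eq_zero fun b _ => ?_
      rw [show (fun q : TMpt n => aframe D (Sum.inl i) q (Sum.inl h))
          = fun _ => if h = i then (1:ℝ) else 0 from rfl, dapply_const]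
      ring
    have z2 : ∀ h : Fin n, ∑ b, fderiv ℝ (fun q => aframe D (Sum.inl i) q (Sum.inr h)) p (ebase d)
        * aframe D (Sum.inl j) p b * gBS D δ p (Sum.inr h) b = 0 := by
      intro h
      have e : ∑ b, fderiv ℝ (fun q => aframe D (Sum.inl i) q (Sum.inr h)) p (ebase d)
            * aframe D (Sum.inl j) p b * gBS D δ p (Sum.inr h) b
          = fderiv ℝ (fun q => aframe D (Sum.inl i) q (Sum.inr h)) p (ebase d)
            * ∑ b, aframe D (Sum.inl j) p b * gBS D δ p b (Sum.inr h) := by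
        rw [Finset.mul_sum]
        refine Finset.sum_congr rfl fun b _ => ?_
        rw [gBS_symm D δ p b (Sum.inr h)]
        ring
      rw [e, H_contract]
      simp
    simp only [z1, z2, Finset.sum_const_zero, add_zero]
  have v2 : ∑ a, ∑ b, aframe D (Sum.inl i) p a
        * fderiv ℝ (fun q => aframe D (Sum.inl j) q b) p (ebase d) * gBS D δ p a b = 0 := by
    rw [Finset.sum_comm, Fintype.sum_sum_type]
    have z1 : ∀ h : Fin n, ∑ a, aframe D (Sum.inl i) p a
        * fderiv ℝ (fun q => aframe D (Sum.inl j) q (Sum.inl h)) p (ebase d)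
        * gBS D δ p a (Sum.inl h) = 0 := by
      intro h
      refine Finset.sum_eq_zero fun a _ => ?_
      rw [show (fun q : TMpt n => aframe D (Sum.inl j) q (Sum.inl h))
          = fun _ => if h = j then (1:ℝ) else 0 from rfl, dapply_const]
      ring
    have z2 : ∀ h : Fin n, ∑ a, aframe D (Sum.inl i) p a
        * fderiv ℝ (fun q => aframe D (Sum.inl j) q (Sum.inr h)) p (ebase d)
        * gBS D δ p a (Sum.inr h) = 0 := by
      intro h
      have e : ∑ a, aframe D (Sum.inl i) p a
            * fderiv ℝ (fun q => aframe D (Sum.inl j) q (Sum.inr h)) p (ebase d)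
            * gBS D δ p a (Sum.inr h)
          = fderiv ℝ (fun q => aframe D (Sum.inl j) q (Sum.inr h)) p (ebase d)
            * ∑ a, aframe D (Sum.inl i) p a * gBS D δ p a (Sum.inr h) := by
        rw [Finset.mul_sum]
        refine Finset.sum_congr rfl fun a _ => ?_
        ring
      rw [e, H_contract]
      simp
    simp only [z1, z2, Finset.sum_const_zero, add_zero]
  rw [step]
  simp only [Finset.sum_add_distrib]
  rw [v1, v2]
  simp

lemma GammaT_lowered (p : TMpt n) (a b d : Idx n) :
    ∑ c, gBS D δ p d c * GammaT (gBS D δ) p a b c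
      = (1/2) * (pdT a (fun q => gBS D δ q b d) p + pdT b (fun q => gBS D δ q a d) p
          - pdT d (fun q => gBS D δ q a b) p) := by
  have hone : ∀ e, ∑ c, gBS D δ p d c * (gBS D δ p)⁻¹ c e
      = (1 : Matrix (Idx n) (Idx n) ℝ) d e := by
    intro e
    rw [← Matrix.mul_apply, Matrix.mul_nonsing_inv _ (gBS_det_isUnit D δ p)]
  unfold GammaT
  have e1 : ∀ c, gBS D δ p d c * ((1:ℝ)/2 * ∑ e, (gBS D δ p)⁻¹ c e
        * (pdT a (fun q => gBS D δ q b e) p + pdT b (fun q => gBS D δ q a e) p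
          - pdT e (fun q => gBS D δ q a b) p))
      = ∑ e, (1/2 * (pdT a (fun q => gBS D δ q b e) p + pdT b (fun q => gBS D δ q a e) p
          - pdT e (fun q => gBS D δ q a b) p)) * (gBS D δ p d c * (gBS D δ p)⁻¹ c e) := by
    intro c
    rw [Finset.mul_sum, Finset.mul_sum]
    exact Finset.sum_congr rfl fun e _ => by ring
  calc ∑ c, gBS D δ p d c * ((1:ℝ)/2 * ∑ e, (gBS D δ p)⁻¹ c e
        * (pdT a (fun q => gBS D δ q b e) p + pdT b (fun q => gBS D δ q a e) p
          - pdT e (fun q => gBS D δ q a b) p))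
      = ∑ c, ∑ e, (1/2 * (pdT a (fun q => gBS D δ q b e) p
          + pdT b (fun q => gBS D δ q a e) p - pdT e (fun q => gBS D δ q a b) p))
          * (gBS D δ p d c * (gBS D δ p)⁻¹ c e) := Finset.sum_congr rfl fun c _ => e1 c
    _ = ∑ e, (1/2 * (pdT a (fun q => gBS D δ q b e) p
          + pdT b (fun q => gBS D δ q a e) p - pdT e (fun q => gBS D δ q a b) p))
          * ∑ c, gBS D δ p d c * (gBS D δ p)⁻¹ c e := by
        rw [Finset.sum_comm]
        exact Finset.sum_congr rfl fun e _ => by rw [Finset.mul_sum]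
    _ = ∑ e, (1/2 * (pdT a (fun q => gBS D δ q b e) p
          + pdT b (fun q => gBS D δ q a e) p - pdT e (fun q => gBS D δ q a b) p))
          * (1 : Matrix (Idx n) (Idx n) ℝ) d e := by
        exact Finset.sum_congr rfl fun e _ => by rw [hone e]
    _ = (1/2) * (pdT a (fun q => gBS D δ q b d) p + pdT b (fun q => gBS D δ q a d) p
          - pdT d (fun q => gBS D δ q a b) p) := by
        rw [Finset.sum_eq_single d]
        · simp [Matrix.one_apply]
        · intro e _ he
          simp [Matrix.one_apply, Ne.symm he]
        · intro hd; exact absurd (Finset.mem_univ d) hd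

lemma ginv_symm (x : Fin n → ℝ) (l m : Fin n) : (D.g x)⁻¹ l m = (D.g x)⁻¹ m l := by
  have h : ((D.g x)⁻¹)ᵀ = (D.g x)⁻¹ := by
    rw [Matrix.transpose_nonsing_inv, show (D.g x)ᵀ = D.g x from D.g_symm x]
  conv_lhs => rw [← h]
  rw [Matrix.transpose_apply]

lemma christoffel_contract (x : Fin n → ℝ) (i j m : Fin n) :
    2 * ∑ l, Gamma D x i j l * D.g x l m
      = pd i (fun y => D.g y j m) x + pd j (fun y => D.g y i m) x
        - pd m (fun y => D.g y i j) x := by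
  have hone : ∀ l', ∑ l, D.g x l m * (D.g x)⁻¹ l l'
      = (1 : Matrix (Fin n) (Fin n) ℝ) l' m := by
    intro l'
    have e : ∑ l, D.g x l m * (D.g x)⁻¹ l l' = ∑ l, (D.g x)⁻¹ l' l * D.g x l m := by
      refine Finset.sum_congr rfl fun l _ => ?_
      rw [ginv_symm D x l l']
      ring
    rw [e, ← Matrix.mul_apply, Matrix.nonsing_inv_mul _ (gdet_ne D x).isUnit]
  unfold Gamma
  calc 2 * ∑ l, (1/2 : ℝ) * (∑ l', (D.g x)⁻¹ l l'
        * (pd i (fun y => D.g y j l') x + pd j (fun y => D.g y i l') x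
          - pd l' (fun y => D.g y i j) x)) * D.g x l m
      = ∑ l, ∑ l', (pd i (fun y => D.g y j l') x + pd j (fun y => D.g y i l') x
          - pd l' (fun y => D.g y i j) x) * (D.g x l m * (D.g x)⁻¹ l l') := by
        rw [Finset.mul_sum]
        refine Finset.sum_congr rfl fun l _ => ?_
        rw [mul_assoc, Finset.sum_mul, Finset.mul_sum, Finset.mul_sum]
        refine Finset.sum_congr rfl fun l' _ => ?_
        ring
    _ = ∑ l', (pd i (fun y => D.g y j l') x + pd j (fun y => D.g y i l') x
          - pd l' (fun y => D.g y i j) x) * ∑ l, D.g x l m * (D.g x)⁻¹ l l' := by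
        rw [Finset.sum_comm]
        exact Finset.sum_congr rfl fun l' _ => by rw [Finset.mul_sum]
    _ = ∑ l', (pd i (fun y => D.g y j l') x + pd j (fun y => D.g y i l') x
          - pd l' (fun y => D.g y i j) x) * (1 : Matrix (Fin n) (Fin n) ℝ) l' m := by
        exact Finset.sum_congr rfl fun l' _ => by rw [hone l']
    _ = pd i (fun y => D.g y j m) x + pd j (fun y => D.g y i m) x
          - pd m (fun y => D.g y i j) x := by
        rw [Finset.sum_eq_single m]
        · simp [Matrix.one_apply]
        · intro l' _ hl'
          simp [Matrix.one_apply, hl']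
        · intro hd; exact absurd (Finset.mem_univ m) hd


lemma schwarz_ximap (hξ : ∀ h, ContDiff ℝ (⊤:ℕ∞) fun x => ξ x h) (x : Fin n → ℝ)
    (i j : Fin n) (c : Idx n) :
    pd j (fun y => pd i (fun z => ximap ξ z c) y) x
      = pd i (fun y => pd j (fun z => ximap ξ z c) y) x := by
  rcases c with h | h
  · have e1 : ∀ m : Fin n, (fun y => pd m (fun z => ximap ξ z (Sum.inl h)) y)
        = fun _ : Fin n → ℝ => if h = m then (1:ℝ) else 0 := by
      intro m; funext y
      exact pd_proj m h y
    rw [e1 i, e1 j]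
    unfold pd
    simp
  · exact schwarz (hξ h) x (Pi.single i 1) (Pi.single j 1)

lemma Jvec_eq_frame (hiso : IsIsometricImmersion D δ ξ) (x : Fin n → ℝ) (m : Fin n) :
    Jvec ξ x m = fun a => aframe D (Sum.inl m) (x, ξ x) a := by
  funext a
  rcases a with h | h
  · rw [Jvec_inl]; rfl
  · rw [Jvec_inr]
    show _ = - Gamma0 D (x, ξ x) m h
    have hz := nabla_zero D δ ξ hiso x m h
    have e : nabla D ξ x m h = pd m (fun z => ξ z h) x + Gamma0 D (x, ξ x) m h := rfl
    rw [e] at hz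
    linarith

lemma cd_gBS_hat (hξ : ∀ h, ContDiff ℝ (⊤:ℕ∞) fun x => ξ x h) (c d : Idx n) :
    ContDiff ℝ (⊤:ℕ∞) fun y => gBS D δ (y, ξ y) c d :=
  (cd_gBS D δ c d).comp (contDiff_id.prodMk (contDiff_pi.mpr hξ))

lemma cd_Jvec (hξ : ∀ h, ContDiff ℝ (⊤:ℕ∞) fun x => ξ x h) (j : Fin n) (c : Idx n) :
    ContDiff ℝ (⊤:ℕ∞) fun y => Jvec ξ y j c := by
  rcases c with h | h
  · rw [show (fun y => Jvec ξ y j (Sum.inl h)) = fun _ => if h = j then (1:ℝ) else 0 from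
      funext fun y => Jvec_inl ξ y j h]
    exact contDiff_const
  · exact cd_fderiv_apply (hξ h) _

lemma Tfun_eq (hiso : IsIsometricImmersion D δ ξ) (j : Fin n) (d : Idx n) :
    (fun y => ∑ c, Jvec ξ y j c * gBS D δ (y, ξ y) c d)
      = fun y => Sum.elim (fun m => D.g y j m) (fun _ => (0:ℝ)) d := by
  funext y
  rw [Jvec_eq_frame D δ ξ hiso y j]
  exact H_contract D δ (y, ξ y) j d

lemma pd_T_expand (hξ : ∀ h, ContDiff ℝ (⊤:ℕ∞) fun x => ξ x h) (x : Fin n → ℝ)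
    (i jj : Fin n) (d : Idx n) :
    pd i (fun y => ∑ c, Jvec ξ y jj c * gBS D δ (y, ξ y) c d) x
      = (∑ c, pd i (fun y => Jvec ξ y jj c) x * gBS D δ (x, ξ x) c d)
        + ∑ c, Jvec ξ x jj c * pd i (fun y => gBS D δ (y, ξ y) c d) x := by
  unfold pd
  rw [dapply_sum _ _ _ _ (fun c _ =>
    ((cd_diff ((cd_Jvec ξ hξ jj c).mul (cd_gBS_hat D δ ξ hξ c d))) x))]
  rw [← Finset.sum_add_distrib]
  refine Finset.sum_congr rfl fun c _ => ?_
  rw [dapply_mul _ _ ((cd_diff (cd_Jvec ξ hξ jj c)) x) ((cd_diff (cd_gBS_hat D δ ξ hξ c d)) x)]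
  ring

/-- The central computation: the `gBS`-lowered second fundamental form vanishes. -/
lemma key_lowered (hξ : ∀ h, ContDiff ℝ (⊤:ℕ∞) fun x => ξ x h)
    (hiso : IsIsometricImmersion D δ ξ) (x : Fin n → ℝ) (i j : Fin n) (d : Idx n) :
    ∑ c, gBS D δ (x, ξ x) d c * betaM2TM D δ ξ x i j c = 0 := by
  have hbeta : ∀ c, betaM2TM D δ ξ x i j c
      = pd i (fun y => Jvec ξ y j c) x
        - ∑ m, Gamma D x i j m * Jvec ξ x m c
        + ∑ a, ∑ b, GammaT (gBS D δ) (x, ξ x) a b c * Jvec ξ x i a * Jvec ξ x j b :=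
    fun c => rfl
  -- the three parts
  have h1 : ∑ c, gBS D δ (x, ξ x) d c * betaM2TM D δ ξ x i j c
      = (∑ c, gBS D δ (x, ξ x) d c * pd i (fun y => Jvec ξ y j c) x)
        - (∑ m, Gamma D x i j m * (∑ c, gBS D δ (x, ξ x) d c * Jvec ξ x m c))
        + ∑ c, gBS D δ (x, ξ x) d c
            * (∑ a, ∑ b, GammaT (gBS D δ) (x, ξ x) a b c * Jvec ξ x i a * Jvec ξ x j b) := by
    have swap : ∑ c, gBS D δ (x, ξ x) d c * ∑ m, Gamma D x i j m * Jvec ξ x m c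
        = ∑ m, Gamma D x i j m * ∑ c, gBS D δ (x, ξ x) d c * Jvec ξ x m c := by
      have ee : ∀ c, gBS D δ (x, ξ x) d c * ∑ m, Gamma D x i j m * Jvec ξ x m c
          = ∑ m, Gamma D x i j m * (gBS D δ (x, ξ x) d c * Jvec ξ x m c) := by
        intro c; rw [Finset.mul_sum]; exact Finset.sum_congr rfl fun m _ => by ring
      simp only [ee]
      rw [Finset.sum_comm]
      exact Finset.sum_congr rfl fun m _ => by rw [Finset.mul_sum]
    simp only [hbeta, mul_sub, mul_add]
    rw [Finset.sum_add_distrib, Finset.sum_sub_distrib, swap]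
  -- the contraction with `Jvec` gives the base metric
  have hT2 : ∀ m, ∑ c, gBS D δ (x, ξ x) d c * Jvec ξ x m c
      = Sum.elim (fun m' => D.g x m m') (fun _ => (0:ℝ)) d := by
    intro m
    have e : ∑ c, gBS D δ (x, ξ x) d c * Jvec ξ x m c
        = ∑ c, aframe D (Sum.inl m) (x, ξ x) c * gBS D δ (x, ξ x) c d := by
      rw [Jvec_eq_frame D δ ξ hiso x m]
      refine Finset.sum_congr rfl fun c _ => ?_
      rw [gBS_symm D δ _ d c]
      exact mul_comm _ _
    rw [e]
    exact H_contract D δ (x, ξ x) m d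
  -- the Christoffel contraction, lowered
  have hS1 : ∑ a, ∑ b, Jvec ξ x i a * Jvec ξ x j b
        * pdT a (fun q => gBS D δ q b d) (x, ξ x)
      = ∑ b, Jvec ξ x j b * pd i (fun y => gBS D δ (y, ξ y) b d) x := by
    rw [Finset.sum_comm]
    refine Finset.sum_congr rfl fun b _ => ?_
    rw [← contract_chain ξ hξ (cd_gBS D δ b d) x i, Finset.mul_sum]
    refine Finset.sum_congr rfl fun a _ => ?_
    ring
  have hS2 : ∑ a, ∑ b, Jvec ξ x i a * Jvec ξ x j b
        * pdT b (fun q => gBS D δ q a d) (x, ξ x)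
      = ∑ a, Jvec ξ x i a * pd j (fun y => gBS D δ (y, ξ y) a d) x := by
    refine Finset.sum_congr rfl fun a _ => ?_
    rw [← contract_chain ξ hξ (cd_gBS D δ a d) x j, Finset.mul_sum]
    refine Finset.sum_congr rfl fun b _ => ?_
    ring
  have hS3 : ∑ a, ∑ b, Jvec ξ x i a * Jvec ξ x j b
        * pdT d (fun q => gBS D δ q a b) (x, ξ x)
      = pdT d (fun q => D.g q.1 i j) (x, ξ x) := by
    rw [Jvec_eq_frame D δ ξ hiso x i, Jvec_eq_frame D δ ξ hiso x j]
    exact frame_deriv D δ (x, ξ x) d i j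
  have h2 : 2 * (∑ c, gBS D δ (x, ξ x) d c
        * (∑ a, ∑ b, GammaT (gBS D δ) (x, ξ x) a b c * Jvec ξ x i a * Jvec ξ x j b))
      = (∑ b, Jvec ξ x j b * pd i (fun y => gBS D δ (y, ξ y) b d) x)
        + (∑ a, Jvec ξ x i a * pd j (fun y => gBS D δ (y, ξ y) a d) x)
        - pdT d (fun q => D.g q.1 i j) (x, ξ x) := by
    have e1 : ∀ c, gBS D δ (x, ξ x) d c
          * (∑ a, ∑ b, GammaT (gBS D δ) (x, ξ x) a b c * Jvec ξ x i a * Jvec ξ x j b)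
        = ∑ a, ∑ b, Jvec ξ x i a * Jvec ξ x j b
            * (gBS D δ (x, ξ x) d c * GammaT (gBS D δ) (x, ξ x) a b c) := by
      intro c
      rw [Finset.mul_sum]
      refine Finset.sum_congr rfl fun a _ => ?_
      rw [Finset.mul_sum]
      refine Finset.sum_congr rfl fun b _ => ?_
      ring
    have e2 : ∑ c, gBS D δ (x, ξ x) d c
          * (∑ a, ∑ b, GammaT (gBS D δ) (x, ξ x) a b c * Jvec ξ x i a * Jvec ξ x j b)
        = ∑ a, ∑ b, Jvec ξ x i a * Jvec ξ x j b
            * (∑ c, gBS D δ (x, ξ x) d c * GammaT (gBS D δ) (x, ξ x) a b c) := by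
      simp only [e1]
      rw [Finset.sum_comm]
      refine Finset.sum_congr rfl fun a _ => ?_
      rw [Finset.sum_comm]
      refine Finset.sum_congr rfl fun b _ => ?_
      rw [Finset.mul_sum]
    rw [e2]
    have e3 : ∀ (a b : Idx n), Jvec ξ x i a * Jvec ξ x j b
          * (∑ c, gBS D δ (x, ξ x) d c * GammaT (gBS D δ) (x, ξ x) a b c)
        = 1/2 * (Jvec ξ x i a * Jvec ξ x j b * pdT a (fun q => gBS D δ q b d) (x, ξ x))
          + 1/2 * (Jvec ξ x i a * Jvec ξ x j b * pdT b (fun q => gBS D δ q a d) (x, ξ x))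
          - 1/2 * (Jvec ξ x i a * Jvec ξ x j b * pdT d (fun q => gBS D δ q a b) (x, ξ x)) := by
      intro a b
      rw [GammaT_lowered D δ (x, ξ x) a b d]
      ring
    simp only [e3]
    simp only [Finset.sum_sub_distrib, Finset.sum_add_distrib]
    simp only [← Finset.mul_sum]
    rw [hS1, hS2, hS3]
    ring
  -- derivative expansions of the tangential contraction functions
  have hTd1 := pd_T_expand D δ ξ hξ x i j d
  have hTd2 := pd_T_expand D δ ξ hξ x j i d
  have hsym : ∀ c, pd j (fun y => Jvec ξ y i c) x = pd i (fun y => Jvec ξ y j c) x :=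
    fun c => schwarz_ximap ξ hξ x i j c
  simp only [hsym] at hTd2
  have hA : ∑ c, gBS D δ (x, ξ x) d c * pd i (fun y => Jvec ξ y j c) x
      = ∑ c, pd i (fun y => Jvec ξ y j c) x * gBS D δ (x, ξ x) c d := by
    refine Finset.sum_congr rfl fun c _ => ?_
    rw [gBS_symm D δ _ d c]
    ring
  have hzero : ∀ ii : Fin n, pd ii (fun _ : Fin n → ℝ => (0:ℝ)) x = 0 :=
    fun ii => dapply_const 0 x _
  rcases d with m | m
  · rw [Tfun_eq D δ ξ hiso j (Sum.inl m)] at hTd1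
    rw [Tfun_eq D δ ξ hiso i (Sum.inl m)] at hTd2
    simp only [Sum.elim_inl] at hTd1 hTd2
    rw [pdT_fst_inl (D.g_smooth i j) (x, ξ x) m] at h2
    have hch := christoffel_contract D x i j m
    rw [h1, hA]
    simp only [hT2, Sum.elim_inl]
    linarith [h2, hTd1, hTd2, hch]
  · rw [Tfun_eq D δ ξ hiso j (Sum.inr m)] at hTd1
    rw [Tfun_eq D δ ξ hiso i (Sum.inr m)] at hTd2
    simp only [Sum.elim_inr] at hTd1 hTd2
    rw [hzero i] at hTd1
    rw [hzero j] at hTd2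
    rw [pdT_fst_inr (D.g_smooth i j) (x, ξ x) m] at h2
    rw [h1, hA]
    simp only [hT2, Sum.elim_inr, mul_zero, Finset.sum_const_zero]
    linarith [h2, hTd1, hTd2]

end MoreAux


namespace BergerSasaki

/-- If a vector field `ξ`, regarded as a map `ξ : (M, g) → (TM, g_BS)`,
is an isometric immersion, then `ξ` is totally geodesic; furthermore `ξ` is harmonic. -/
theorem xi_isometricImmersion_totallyGeodesic_harmonic (k : ℕ) (D : PreData (2 * k))
    (hD : IsAntiParaKahler D) (δ : ℝ) (ξ : (Fin (2 * k) → ℝ) → Fin (2 * k) → ℝ)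
    (hξ : ∀ h, ContDiff ℝ (⊤ : ℕ∞) fun x => ξ x h)
    (hiso : IsIsometricImmersion D δ ξ) :
    (∀ (x : Fin (2 * k) → ℝ) (i j : Fin (2 * k)) (c : Idx (2 * k)),
        betaM2TM D δ ξ x i j c = 0) ∧
    (∀ (x : Fin (2 * k) → ℝ) (c : Idx (2 * k)),
        (∑ i, ∑ j, (D.g x)⁻¹ i j * betaM2TM D δ ξ x i j c) = 0) := by
  classical
  have main : ∀ (x : Fin (2 * k) → ℝ) (i j : Fin (2 * k)) (c : Idx (2 * k)),
      betaM2TM D δ ξ x i j c = 0 := by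
    intro x i j
    have hGv : gBS D δ (x, ξ x) *ᵥ (fun c => betaM2TM D δ ξ x i j c) = 0 := by
      funext d
      have h := MoreAux.key_lowered D δ ξ hξ hiso x i j d
      simpa [Matrix.mulVec, dotProduct] using h
    have hfin : (fun c => betaM2TM D δ ξ x i j c) = 0 := by
      calc (fun c => betaM2TM D δ ξ x i j c)
          = ((gBS D δ (x, ξ x))⁻¹ * gBS D δ (x, ξ x))
              *ᵥ (fun c => betaM2TM D δ ξ x i j c) := by
            rw [Matrix.nonsing_inv_mul _ (BergerSasaki2Aux.gBS_det_isUnit D δ (x, ξ x)),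
              Matrix.one_mulVec]
        _ = (gBS D δ (x, ξ x))⁻¹
              *ᵥ (gBS D δ (x, ξ x) *ᵥ (fun c => betaM2TM D δ ξ x i j c)) :=
            (Matrix.mulVec_mulVec _ _ _).symm
        _ = 0 := by rw [hGv, Matrix.mulVec_zero]
    intro c
    exact congrFun hfin c
  refine ⟨main, fun x c => ?_⟩
  simp only [main, mul_zero, Finset.sum_const_zero]

end BergerSasaki
end

section
/- Let (M,φ,g) be a 2k-dimensional anti-paraKähler manifold with δ ≠ 0, (TM,g_BS) its tangent bundle with the Berger type deformed Sasaki metric and (TM,g_S) its tangent bundle with the Sasaki metric. The identity map I : (TM,g_BS) → (TM,g_S) cannot be totally geodesic. -/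
/-!
A local-coordinate formalization (in a global chart `ℝⁿ`, `n = 2k`) of the
geometry of the tangent bundle of an anti-paraKähler manifold `(M, φ, g)`
endowed with the Berger type deformed Sasaki metric `g_BS`.
-/

open scoped BigOperators
open Matrix

namespace BergerSasaki

variable {n : ℕ}

/-! ### Auxiliary development -/

section Aux

variable {X : Type*} [NormedAddCommGroup X] [NormedSpace ℝ X]
variable {m : Type*} [Fintype m] [DecidableEq m]

private lemma contDiff_finprod {ι : Type*} (s : Finset ι) (f : ι → X → ℝ)
    (h : ∀ i ∈ s, ContDiff ℝ (⊤ : ℕ∞) (f i)) :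
    ContDiff ℝ (⊤ : ℕ∞) fun x => ∏ i ∈ s, f i x := by
  classical
  induction s using Finset.cons_induction with
  | empty => simpa using contDiff_const
  | cons a s ha ih =>
      simp only [Finset.prod_cons]
      exact (h a (Finset.mem_cons_self a s)).mul
        (ih fun i hi => h i (Finset.mem_cons_of_mem hi))

private lemma contDiff_det {M : X → Matrix m m ℝ}
    (h : ∀ i j, ContDiff ℝ (⊤ : ℕ∞) fun x => M x i j) :
    ContDiff ℝ (⊤ : ℕ∞) fun x => (M x).det := by
  simp only [Matrix.det_apply']
  refine ContDiff.sum fun σ _ => ?_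
  exact contDiff_const.mul (contDiff_finprod Finset.univ _ fun i _ => h (σ i) i)

private lemma contDiff_inv_entry {M : X → Matrix m m ℝ}
    (h : ∀ i j, ContDiff ℝ (⊤ : ℕ∞) fun x => M x i j)
    (hdet : ∀ x, (M x).det ≠ 0) (i j : m) :
    ContDiff ℝ (⊤ : ℕ∞) fun x => (M x)⁻¹ i j := by
  have hinv : ∀ x, (M x)⁻¹ i j = ((M x).det)⁻¹ * (M x).adjugate i j := by
    intro x
    rw [Matrix.inv_def, Matrix.smul_apply, Ring.inverse_eq_inv', smul_eq_mul]
  simp only [hinv, Matrix.adjugate_apply]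
  refine ((contDiff_det h).inv hdet).mul (contDiff_det fun r s => ?_)
  rcases eq_or_ne r j with rfl | hr
  · simpa [Matrix.updateRow_apply] using contDiff_const
  · simpa [Matrix.updateRow_apply, hr] using h r s

private lemma contDiff_fderiv_apply {f : X → ℝ} (hf : ContDiff ℝ (⊤ : ℕ∞) f) (v : X) :
    ContDiff ℝ (⊤ : ℕ∞) fun x => fderiv ℝ f x v :=
  (hf.fderiv_right (by simp)).clm_apply contDiff_const

private lemma isHermitian_of_symm {A : Matrix m m ℝ} (h : ∀ i j, A i j = A j i) :
    A.IsHermitian := by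
  ext i j
  simp [Matrix.conjTranspose_apply, h i j]

variable {n : ℕ} (D : PreData n)

lemma g_det_ne (x : Fin n → ℝ) : (D.g x).det ≠ 0 := (D.g_posdef x).det_pos.ne'

lemma contDiff_g_inv (i j : Fin n) : ContDiff ℝ (⊤ : ℕ∞) fun x => (D.g x)⁻¹ i j :=
  contDiff_inv_entry D.g_smooth (g_det_ne D) i j

lemma contDiff_pd (i : Fin n) {f : (Fin n → ℝ) → ℝ} (hf : ContDiff ℝ (⊤ : ℕ∞) f) :
    ContDiff ℝ (⊤ : ℕ∞) fun x => pd i f x := contDiff_fderiv_apply hf _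

lemma contDiff_Gamma (i j h : Fin n) : ContDiff ℝ (⊤ : ℕ∞) fun x => Gamma D x i j h := by
  unfold Gamma
  refine contDiff_const.mul (ContDiff.sum fun l _ => (contDiff_g_inv D h l).mul ?_)
  exact ((contDiff_pd i (D.g_smooth j l)).add (contDiff_pd j (D.g_smooth i l))).sub
    (contDiff_pd l (D.g_smooth i j))

lemma contDiff_snd_apply (i : Fin n) : ContDiff ℝ (⊤ : ℕ∞) fun p : TMpt n => p.2 i :=
  contDiff_pi.mp contDiff_snd i

lemma contDiff_wvec (i : Fin n) : ContDiff ℝ (⊤ : ℕ∞) fun p : TMpt n => wvec D p i := by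
  unfold wvec
  refine ContDiff.sum fun m _ => ((D.phi_smooth m i).comp contDiff_fst).mul
    (ContDiff.sum fun l _ => ((D.g_smooth m l).comp contDiff_fst).mul (contDiff_snd_apply l))

lemma contDiff_Gamma0 (i h : Fin n) :
    ContDiff ℝ (⊤ : ℕ∞) fun p : TMpt n => Gamma0 D p i h := by
  unfold Gamma0
  exact ContDiff.sum fun m _ =>
    ((contDiff_Gamma D i m h).comp contDiff_fst).mul (contDiff_snd_apply m)

lemma contDiff_Bmat (a b : Idx n) :
    ContDiff ℝ (⊤ : ℕ∞) fun p : TMpt n => Bmat D p a b := by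
  rcases a with h | h <;> rcases b with i | i <;>
    simp only [Bmat, Sum.elim_inl, Sum.elim_inr]
  · exact contDiff_const
  · exact contDiff_const
  · exact contDiff_Gamma0 D i h
  · exact contDiff_const

lemma contDiff_gBSad (δ : ℝ) (a b : Idx n) :
    ContDiff ℝ (⊤ : ℕ∞) fun p : TMpt n => gBSad D δ p a b := by
  rcases a with i | i <;> rcases b with j | j <;>
    simp only [gBSad, Sum.elim_inl, Sum.elim_inr]
  · exact (D.g_smooth i j).comp contDiff_fst
  · exact contDiff_const
  · exact contDiff_const
  · exact ((D.g_smooth i j).comp contDiff_fst).add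
      ((contDiff_const.mul (contDiff_wvec D i)).mul (contDiff_wvec D j))

lemma gBS_apply (δ : ℝ) (p : TMpt n) (a b : Idx n) :
    gBS D δ p a b = ∑ d, (∑ c, Bmat D p c a * gBSad D δ p c d) * Bmat D p d b := by
  simp [gBS, Matrix.mul_apply, Matrix.transpose_apply]

lemma contDiff_gBS (δ : ℝ) (a b : Idx n) :
    ContDiff ℝ (⊤ : ℕ∞) fun p : TMpt n => gBS D δ p a b := by
  simp only [gBS_apply]
  exact ContDiff.sum fun d _ =>
    (ContDiff.sum fun c _ => (contDiff_Bmat D c a).mul (contDiff_gBSad D δ c d)).mul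
      (contDiff_Bmat D d b)

end Aux

section Detn

variable {n : ℕ} (D : PreData n)

lemma g_apply_symm (x : Fin n → ℝ) (i j : Fin n) : D.g x i j = D.g x j i := by
  have h := D.g_symm x
  exact (congrFun (congrFun h j) i).symm ▸ rfl

lemma gBSad_symm' (δ : ℝ) (p : TMpt n) (a b : Idx n) :
    gBSad D δ p a b = gBSad D δ p b a := by
  rcases a with i | i <;> rcases b with j | j <;>
    simp only [gBSad, Sum.elim_inl, Sum.elim_inr]
  · exact g_apply_symm D p.1 i j
  · rw [g_apply_symm D p.1 i j]; ring

lemma gBSad_isSymm (δ : ℝ) (p : TMpt n) : (gBSad D δ p).IsSymm := by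
  apply Matrix.ext
  intro i j
  rw [Matrix.transpose_apply]
  exact gBSad_symm' D δ p j i

lemma gBS_isSymm (δ : ℝ) (p : TMpt n) : (gBS D δ p).IsSymm := by
  unfold gBS Matrix.IsSymm
  rw [Matrix.transpose_mul, Matrix.transpose_mul, Matrix.transpose_transpose,
    gBSad_isSymm D δ p, Matrix.mul_assoc]

/-- The vertical-vertical block of `gBSad`, as an `n × n` matrix. -/
noncomputable def G2 (δ : ℝ) (p : TMpt n) : Matrix (Fin n) (Fin n) ℝ :=
  Matrix.of fun i j => D.g p.1 i j + δ ^ 2 * wvec D p i * wvec D p j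

lemma G2_posdef (δ : ℝ) (p : TMpt n) : (G2 D δ p).PosDef := by
  rw [Matrix.posDef_iff_dotProduct_mulVec]
  constructor
  · exact isHermitian_of_symm fun i j => by
      simp only [G2, Matrix.of_apply]
      rw [g_apply_symm D p.1 i j]; ring
  · intro x hx
    have hsx : star x = x := star_trivial x
    rw [hsx]
    have key : dotProduct x ((G2 D δ p) *ᵥ x)
        = dotProduct x ((D.g p.1) *ᵥ x) + δ ^ 2 * (∑ i, wvec D p i * x i) ^ 2 := by
      have hsq : (∑ i, wvec D p i * x i) ^ 2
          = ∑ i, ∑ j, (wvec D p i * x i) * (wvec D p j * x j) := by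
        rw [sq, Finset.sum_mul_sum]
      simp only [dotProduct, Matrix.mulVec, G2, Matrix.of_apply, hsq, Finset.mul_sum]
      rw [← Finset.sum_add_distrib]
      refine Finset.sum_congr rfl fun i _ => ?_
      rw [← Finset.sum_add_distrib]
      refine Finset.sum_congr rfl fun j _ => ?_
      ring
    rw [key]
    have h1 : 0 < dotProduct x ((D.g p.1) *ᵥ x) := by
      have := (D.g_posdef p.1).dotProduct_mulVec_pos hx
      rwa [star_trivial x] at this
    nlinarith [sq_nonneg (∑ i, wvec D p i * x i), sq_nonneg δ]

lemma gBSad_eq_fromBlocks (δ : ℝ) (p : TMpt n) :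
    gBSad D δ p = Matrix.fromBlocks (D.g p.1) 0 0 (G2 D δ p) := by
  apply Matrix.ext
  intro a b
  rcases a with i | i <;> rcases b with j | j <;>
    simp [gBSad, G2, Matrix.fromBlocks]

lemma Bmat_eq_fromBlocks (p : TMpt n) :
    Bmat D p = Matrix.fromBlocks 1 0 (Matrix.of fun h i => Gamma0 D p i h) 1 := by
  apply Matrix.ext
  intro a b
  rcases a with h | h <;> rcases b with i | i <;>
    simp [Bmat, Matrix.fromBlocks, Matrix.one_apply]

lemma Bmat_det (p : TMpt n) : (Bmat D p).det = 1 := by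
  rw [Bmat_eq_fromBlocks, Matrix.det_fromBlocks_zero₁₂]
  simp

lemma gBSad_det_pos (δ : ℝ) (p : TMpt n) : 0 < (gBSad D δ p).det := by
  rw [gBSad_eq_fromBlocks, Matrix.det_fromBlocks_zero₁₂]
  exact mul_pos (D.g_posdef p.1).det_pos (G2_posdef D δ p).det_pos

lemma gBS_det_ne (δ : ℝ) (p : TMpt n) : (gBS D δ p).det ≠ 0 := by
  unfold gBS
  rw [Matrix.det_mul, Matrix.det_mul, Matrix.det_transpose, Bmat_det]
  simpa using (gBSad_det_pos D δ p).ne'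

end Detn

section Koszul

variable {n : ℕ}

/-- Contracting the Christoffel symbols of a symmetric invertible metric with the
metric recovers the Koszul expression. -/
lemma gammaT_contract (G : TMpt n → Matrix (Idx n) (Idx n) ℝ) (p : TMpt n)
    (hs : (G p).IsSymm) (hd : (G p).det ≠ 0) (a b e : Idx n) :
    ∑ c, GammaT G p a b c * G p c e
      = (1 / 2) * (pdT a (fun q => G q b e) p + pdT b (fun q => G q a e) p
          - pdT e (fun q => G q a b) p) := by
  unfold GammaT
  have hinv : ∀ d : Idx n, (∑ c, (G p)⁻¹ c d * G p c e) = (1 : Matrix (Idx n) (Idx n) ℝ) d e := by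
    intro d
    have h1 : (G p)⁻¹ * G p = 1 := Matrix.nonsing_inv_mul _ (Ne.isUnit hd)
    have h2 : ((G p)⁻¹)ᵀ = (G p)⁻¹ := by
      rw [Matrix.transpose_nonsing_inv, hs]
    calc (∑ c, (G p)⁻¹ c d * G p c e) = ∑ c, ((G p)⁻¹)ᵀ d c * G p c e := by
          simp [Matrix.transpose_apply]
      _ = (((G p)⁻¹)ᵀ * G p) d e := by rw [Matrix.mul_apply]
      _ = (1 : Matrix (Idx n) (Idx n) ℝ) d e := by rw [h2, h1]
  calc ∑ c, ((1:ℝ)/2 * ∑ d, (G p)⁻¹ c d *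
        (pdT a (fun q => G q b d) p + pdT b (fun q => G q a d) p - pdT d (fun q => G q a b) p))
        * G p c e
      = ∑ c, ∑ d, ((G p)⁻¹ c d * G p c e) * ((1:ℝ)/2 *
        (pdT a (fun q => G q b d) p + pdT b (fun q => G q a d) p - pdT d (fun q => G q a b) p)) := by
        refine Finset.sum_congr rfl fun c _ => ?_
        rw [Finset.mul_sum, Finset.sum_mul]
        refine Finset.sum_congr rfl fun d _ => ?_
        ring
    _ = ∑ d, ∑ c, ((G p)⁻¹ c d * G p c e) * ((1:ℝ)/2 *
        (pdT a (fun q => G q b d) p + pdT b (fun q => G q a d) p - pdT d (fun q => G q a b) p)) :=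
        Finset.sum_comm
    _ = ∑ d, (∑ c, (G p)⁻¹ c d * G p c e) * ((1:ℝ)/2 *
        (pdT a (fun q => G q b d) p + pdT b (fun q => G q a d) p - pdT d (fun q => G q a b) p)) := by
        refine Finset.sum_congr rfl fun d _ => ?_
        rw [Finset.sum_mul]
    _ = ∑ d, (1 : Matrix (Idx n) (Idx n) ℝ) d e * ((1:ℝ)/2 *
        (pdT a (fun q => G q b d) p + pdT b (fun q => G q a d) p - pdT d (fun q => G q a b) p)) := by
        refine Finset.sum_congr rfl fun d _ => ?_
        rw [hinv d]
    _ = (1 / 2) * (pdT a (fun q => G q b e) p + pdT b (fun q => G q a e) p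
          - pdT e (fun q => G q a b) p) := by
        simp [Matrix.one_apply, Finset.sum_ite_eq, ite_mul]

end Koszul

section GammaEq

variable {n : ℕ}

lemma pdT_comp (c d : Idx n) (p : TMpt n) :
    pdT d (fun r => comp r c) p = if c = d then 1 else 0 := by
  have hL : ∀ (L : TMpt n →L[ℝ] ℝ), pdT d (fun r => L r) p = L (ebase d) := by
    intro L
    unfold pdT
    rw [L.fderiv]
  rcases c with i | i
  · have h0 : (fun r : TMpt n => comp r (Sum.inl i))
        = fun r => ((ContinuousLinearMap.proj i).comp
            (ContinuousLinearMap.fst ℝ (Fin n → ℝ) (Fin n → ℝ))) r := rfl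
    rw [h0, hL]
    rcases d with j | j <;>
      simp [ebase, Pi.single_apply, eq_comm]
  · have h0 : (fun r : TMpt n => comp r (Sum.inr i))
        = fun r => ((ContinuousLinearMap.proj i).comp
            (ContinuousLinearMap.snd ℝ (Fin n → ℝ) (Fin n → ℝ))) r := rfl
    rw [h0, hL]
    rcases d with j | j <;>
      simp [ebase, Pi.single_apply, eq_comm]

lemma pdT_const (r : ℝ) (a : Idx n) (p : TMpt n) :
    pdT a (fun _ : TMpt n => r) p = 0 := by
  unfold pdT
  simp

lemma pdT_pdT_comp (a b c : Idx n) (p : TMpt n) :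
    pdT a (fun q => pdT b (fun r => comp r c) q) p = 0 := by
  have h0 : (fun q : TMpt n => pdT b (fun r => comp r c) q)
      = fun _ => if c = b then (1:ℝ) else 0 := by
    funext q
    exact pdT_comp c b q
  rw [h0]
  unfold pdT
  simp

lemma gamma_eq_of_beta (D : PreData n) (δ : ℝ)
    (H : ∀ (p : TMpt n) (a b c : Idx n),
      betaTM2TM (gBS D δ) (GammaT (gS D)) (fun p => p) p a b c = 0) :
    ∀ (p : TMpt n) (a b c : Idx n), GammaT (gS D) p a b c = GammaT (gBS D δ) p a b c := by
  intro p a b c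
  have h := H p a b c
  unfold betaTM2TM at h
  simp only [pdT_comp, pdT_pdT_comp, pdT_const, mul_ite, ite_mul, mul_one, mul_zero, one_mul,
    zero_mul, Finset.sum_ite_eq, Finset.sum_ite_eq', Finset.mem_univ, if_true] at h
  linarith

lemma gBS_symm' (D : PreData n) (δ : ℝ) (p : TMpt n) (a b : Idx n) :
    gBS D δ p a b = gBS D δ p b a := (gBS_isSymm D δ p).apply b a

lemma parallel_eq (D : PreData n) (δ : ℝ)
    (HΓ : ∀ (p : TMpt n) (a b c : Idx n), GammaT (gS D) p a b c = GammaT (gBS D δ) p a b c)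
    (p : TMpt n) (a b e : Idx n) :
    pdT a (fun q => gBS D δ q b e) p - pdT a (fun q => gS D q b e) p
      = ∑ c, GammaT (gBS D δ) p a b c * (gBS D δ p c e - gS D p c e)
        + ∑ c, GammaT (gBS D δ) p a e c * (gBS D δ p c b - gS D p c b) := by
  have E1 : ∀ a b e : Idx n,
      ∑ c, GammaT (gBS D δ) p a b c * (gBS D δ p c e - gS D p c e)
        = (1/2) * ((pdT a (fun q => gBS D δ q b e) p - pdT a (fun q => gS D q b e) p)
          + (pdT b (fun q => gBS D δ q a e) p - pdT b (fun q => gS D q a e) p)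
          - (pdT e (fun q => gBS D δ q a b) p - pdT e (fun q => gS D q a b) p)) := by
    intro a b e
    have K1 := gammaT_contract (gBS D δ) p (gBS_isSymm D δ p) (gBS_det_ne D δ p) a b e
    have K2 := gammaT_contract (gS D) p (gBS_isSymm D 0 p) (gBS_det_ne D 0 p) a b e
    have K2' : ∑ c, GammaT (gBS D δ) p a b c * gS D p c e
        = (1 / 2) * (pdT a (fun q => gS D q b e) p + pdT b (fun q => gS D q a e) p
            - pdT e (fun q => gS D q a b) p) := by
      rw [← K2]
      exact Finset.sum_congr rfl fun c _ => by rw [HΓ p a b c]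
    have hsplit : ∑ c, GammaT (gBS D δ) p a b c * (gBS D δ p c e - gS D p c e)
        = (∑ c, GammaT (gBS D δ) p a b c * gBS D δ p c e)
          - ∑ c, GammaT (gBS D δ) p a b c * gS D p c e := by
      rw [← Finset.sum_sub_distrib]
      exact Finset.sum_congr rfl fun c _ => by ring
    rw [hsplit, K1, K2']
    ring
  have h1 := E1 a b e
  have h2 := E1 a e b
  have hswap1 : pdT a (fun q => gBS D δ q e b) p = pdT a (fun q => gBS D δ q b e) p := by
    congr 1
    funext q
    exact gBS_symm' D δ q e b
  have hswap2 : pdT a (fun q => gS D q e b) p = pdT a (fun q => gS D q b e) p := by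
    congr 1
    funext q
    exact gBS_symm' D 0 q e b
  rw [hswap1, hswap2] at h2
  linarith

end GammaEq

section Blocks

variable {n : ℕ} (D : PreData n)

lemma gBS_inr_inr (δ : ℝ) (p : TMpt n) (i j : Fin n) :
    gBS D δ p (Sum.inr i) (Sum.inr j)
      = D.g p.1 i j + δ ^ 2 * wvec D p i * wvec D p j := by
  rw [gBS_apply]
  rw [Fintype.sum_sum_type]
  have hzero : ∀ h : Fin n,
      (∑ c, Bmat D p c (Sum.inr i) * gBSad D δ p c (Sum.inl h)) * Bmat D p (Sum.inl h) (Sum.inr j)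
        = 0 := by
    intro h
    simp [Bmat]
  rw [Finset.sum_eq_zero fun h _ => hzero h, zero_add]
  have hone : ∀ h : Fin n,
      (∑ c, Bmat D p c (Sum.inr i) * gBSad D δ p c (Sum.inr h)) * Bmat D p (Sum.inr h) (Sum.inr j)
        = (if h = j then (1:ℝ) else 0) * gBSad D δ p (Sum.inr i) (Sum.inr h) := by
    intro h
    have : ∑ c, Bmat D p c (Sum.inr i) * gBSad D δ p c (Sum.inr h)
        = gBSad D δ p (Sum.inr i) (Sum.inr h) := by
      rw [Fintype.sum_sum_type]
      simp [Bmat, Finset.sum_ite_eq', ite_mul]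
    rw [this, Bmat]
    simp [mul_comm]
  rw [Finset.sum_congr rfl fun h _ => hone h]
  simp [gBSad, Finset.sum_ite_eq', ite_mul]

lemma wvec_zero (x : Fin n → ℝ) (i : Fin n) : wvec D (x, (0 : Fin n → ℝ)) i = 0 := by
  unfold wvec
  simp

lemma gBS_fiber_zero (δ : ℝ) (x : Fin n → ℝ) :
    gBS D δ (x, (0 : Fin n → ℝ)) = gBS D 0 (x, (0 : Fin n → ℝ)) := by
  unfold gBS
  have : gBSad D δ (x, (0 : Fin n → ℝ)) = gBSad D 0 (x, (0 : Fin n → ℝ)) := by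
    apply Matrix.ext
    intro a b
    rcases a with i | i <;> rcases b with j | j <;>
      simp [gBSad, wvec_zero]
  rw [this]

lemma contDiff_GammaT (δ : ℝ) (a b c : Idx n) :
    ContDiff ℝ (⊤ : ℕ∞) fun p : TMpt n => GammaT (gBS D δ) p a b c := by
  unfold GammaT
  refine contDiff_const.mul (ContDiff.sum fun d _ => ContDiff.mul ?_ ?_)
  · exact contDiff_inv_entry (fun i j => contDiff_gBS D δ i j) (gBS_det_ne D δ) c d
  · unfold pdT
    exact ((contDiff_fderiv_apply (contDiff_gBS D δ b d) _).add
      (contDiff_fderiv_apply (contDiff_gBS D δ a d) _)).sub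
      (contDiff_fderiv_apply (contDiff_gBS D δ a b) _)

end Blocks

section ODE

variable {n : ℕ} (D : PreData n)

lemma hasDerivAt_gBS_line (δ' : ℝ) (u0 : Fin n → ℝ) (b e : Idx n) (t : ℝ) :
    HasDerivAt (fun s : ℝ => gBS D δ' (((0 : Fin n → ℝ), s • u0) : TMpt n) b e)
      (∑ i, u0 i * pdT (Sum.inr i) (fun q => gBS D δ' q b e) ((0 : Fin n → ℝ), t • u0)) t := by
  have hγ : HasDerivAt (fun s : ℝ => (((0 : Fin n → ℝ), s • u0) : TMpt n))
      (((0 : Fin n → ℝ), u0) : TMpt n) t := by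
    have h2 : HasDerivAt (fun s : ℝ => s • u0) u0 t := by
      simpa using (hasDerivAt_id t).smul_const u0
    exact (hasDerivAt_const t (0 : Fin n → ℝ)).prodMk h2
  have hG : HasFDerivAt (fun q : TMpt n => gBS D δ' q b e)
      (fderiv ℝ (fun q : TMpt n => gBS D δ' q b e) ((0 : Fin n → ℝ), t • u0))
      ((0 : Fin n → ℝ), t • u0) :=
    (((contDiff_gBS D δ' b e).differentiable (by simp)) _).hasFDerivAt
  have hcomp := hG.comp_hasDerivAt t hγ
  have hv : (((0 : Fin n → ℝ), u0) : TMpt n) = ∑ i, u0 i • ebase (Sum.inr i) := by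
    have h1 : (∑ i, u0 i • ebase (Sum.inr i) : TMpt n)
        = (∑ i, u0 i • (((0 : Fin n → ℝ), Pi.single i (1:ℝ)) : TMpt n)) := rfl
    rw [h1]
    refine Prod.ext ?_ ?_
    · rw [Prod.fst_sum]
      simp
    · rw [Prod.snd_sum]
      funext j
      simp [Finset.sum_apply, Pi.single_apply, mul_ite, Finset.sum_ite_eq]
  have hval : fderiv ℝ (fun q : TMpt n => gBS D δ' q b e) ((0 : Fin n → ℝ), t • u0)
        (((0 : Fin n → ℝ), u0) : TMpt n)
      = ∑ i, u0 i * pdT (Sum.inr i) (fun q => gBS D δ' q b e) ((0 : Fin n → ℝ), t • u0) := by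
    rw [hv, map_sum]
    refine Finset.sum_congr rfl fun i _ => ?_
    rw [_root_.map_smul, smul_eq_mul]
    rfl
  rw [← hval]
  exact hcomp

lemma gBS_eq_gS_line (δ : ℝ)
    (HΓ : ∀ (p : TMpt n) (a b c : Idx n), GammaT (gS D) p a b c = GammaT (gBS D δ) p a b c)
    (u0 : Fin n → ℝ) (b e : Idx n) :
    gBS D δ (((0 : Fin n → ℝ), u0) : TMpt n) b e
      = gS D (((0 : Fin n → ℝ), u0) : TMpt n) b e := by
  classical
  set γ : ℝ → TMpt n := fun t => (((0 : Fin n → ℝ), t • u0) : TMpt n) with hγdef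
  set F : ℝ → (Idx n × Idx n) → ℝ :=
    fun t be => gBS D δ (γ t) be.1 be.2 - gS D (γ t) be.1 be.2 with hFdef
  set f' : ℝ → (Idx n × Idx n) → ℝ := fun t be =>
    ∑ i, u0 i * ((∑ c, GammaT (gBS D δ) (γ t) (Sum.inr i) be.1 c * F t (c, be.2))
      + (∑ c, GammaT (gBS D δ) (γ t) (Sum.inr i) be.2 c * F t (c, be.1))) with hf'def
  have hF : ∀ t, HasDerivAt F (f' t) t := by
    intro t
    rw [hasDerivAt_pi]
    intro be
    have h1 : HasDerivAt (fun s : ℝ => gBS D δ (γ s) be.1 be.2)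
        (∑ i, u0 i * pdT (Sum.inr i) (fun q => gBS D δ q be.1 be.2) (γ t)) t :=
      hasDerivAt_gBS_line D δ u0 be.1 be.2 t
    have h2 : HasDerivAt (fun s : ℝ => gS D (γ s) be.1 be.2)
        (∑ i, u0 i * pdT (Sum.inr i) (fun q => gS D q be.1 be.2) (γ t)) t :=
      hasDerivAt_gBS_line D 0 u0 be.1 be.2 t
    have h3 := h1.sub h2
    have hval : f' t be
        = (∑ i, u0 i * pdT (Sum.inr i) (fun q => gBS D δ q be.1 be.2) (γ t))
          - ∑ i, u0 i * pdT (Sum.inr i) (fun q => gS D q be.1 be.2) (γ t) := by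
      rw [hf'def, ← Finset.sum_sub_distrib]
      refine Finset.sum_congr rfl fun i _ => ?_
      rw [← mul_sub, parallel_eq D δ HΓ (γ t) (Sum.inr i) be.1 be.2]
    rw [hval]
    exact h3
  set S : ℝ → ℝ := fun t => ∑ a : Idx n, ∑ b' : Idx n, ∑ c : Idx n,
    |GammaT (gBS D δ) (γ t) a b' c| with hSdef
  have hγcont : Continuous γ := by
    exact continuous_const.prodMk (continuous_id.smul continuous_const)
  have hScont : Continuous S := by
    refine continuous_finset_sum _ fun a _ => continuous_finset_sum _ fun b' _ =>
      continuous_finset_sum _ fun c _ => ?_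
    exact ((contDiff_GammaT D δ a b' c).continuous.comp hγcont).abs
  obtain ⟨ts, hts, hmax⟩ := isCompact_Icc.exists_isMaxOn
    (Set.nonempty_Icc.mpr zero_le_one) hScont.continuousOn
  have hSnonneg : ∀ t, 0 ≤ S t := by
    intro t
    refine Finset.sum_nonneg fun a _ => Finset.sum_nonneg fun b' _ =>
      Finset.sum_nonneg fun c _ => abs_nonneg _
  set K : ℝ := (∑ i, |u0 i|) * (2 * S ts) with hK
  have hKnonneg : 0 ≤ K :=
    mul_nonneg (Finset.sum_nonneg fun i _ => abs_nonneg _)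
      (mul_nonneg (by norm_num) (hSnonneg ts))
  have hbound : ∀ t ∈ Set.Ico (0:ℝ) 1, ‖f' t‖ ≤ K * ‖F t‖ + 0 := by
    intro t ht
    rw [add_zero]
    refine (pi_norm_le_iff_of_nonneg (mul_nonneg hKnonneg (norm_nonneg _))).mpr fun be => ?_
    rw [Real.norm_eq_abs]
    have hA : ∀ (x y : Idx n) (i : Fin n),
        |∑ c, GammaT (gBS D δ) (γ t) (Sum.inr i) x c * F t (c, y)| ≤ S t * ‖F t‖ := by
      intro x y i
      have step1 : |∑ c, GammaT (gBS D δ) (γ t) (Sum.inr i) x c * F t (c, y)|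
          ≤ ∑ c, |GammaT (gBS D δ) (γ t) (Sum.inr i) x c| * ‖F t‖ := by
        refine (Finset.abs_sum_le_sum_abs _ _).trans (Finset.sum_le_sum fun c _ => ?_)
        rw [abs_mul]
        refine mul_le_mul_of_nonneg_left ?_ (abs_nonneg _)
        rw [← Real.norm_eq_abs]
        exact norm_le_pi_norm (F t) (c, y)
      rw [← Finset.sum_mul] at step1
      refine step1.trans (mul_le_mul_of_nonneg_right ?_ (norm_nonneg _))
      have hin : ∑ c, |GammaT (gBS D δ) (γ t) (Sum.inr i) x c|
          ≤ ∑ b' : Idx n, ∑ c, |GammaT (gBS D δ) (γ t) (Sum.inr i) b' c| :=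
        Finset.single_le_sum
          (f := fun b' => ∑ c, |GammaT (gBS D δ) (γ t) (Sum.inr i) b' c|)
          (fun b' _ => Finset.sum_nonneg fun c _ => abs_nonneg _) (Finset.mem_univ x)
      refine hin.trans ?_
      exact Finset.single_le_sum
        (f := fun a => ∑ b' : Idx n, ∑ c, |GammaT (gBS D δ) (γ t) a b' c|)
        (fun a _ => Finset.sum_nonneg fun b' _ => Finset.sum_nonneg fun c _ => abs_nonneg _)
        (Finset.mem_univ (Sum.inr i))
    have hSts : S t ≤ S ts := hmax (Set.mem_Icc.mpr ⟨ht.1, ht.2.le⟩)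
    calc |f' t be| ≤ ∑ i, |u0 i| * (2 * (S ts * ‖F t‖)) := by
          rw [hf'def]
          refine (Finset.abs_sum_le_sum_abs _ _).trans (Finset.sum_le_sum fun i _ => ?_)
          rw [abs_mul]
          refine mul_le_mul_of_nonneg_left ?_ (abs_nonneg _)
          have hb1 := (hA be.1 be.2 i).trans
            (mul_le_mul_of_nonneg_right hSts (norm_nonneg _))
          have hb2 := (hA be.2 be.1 i).trans
            (mul_le_mul_of_nonneg_right hSts (norm_nonneg _))
          calc |(∑ c, GammaT (gBS D δ) (γ t) (Sum.inr i) be.1 c * F t (c, be.2))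
              + ∑ c, GammaT (gBS D δ) (γ t) (Sum.inr i) be.2 c * F t (c, be.1)|
              ≤ |∑ c, GammaT (gBS D δ) (γ t) (Sum.inr i) be.1 c * F t (c, be.2)|
                + |∑ c, GammaT (gBS D δ) (γ t) (Sum.inr i) be.2 c * F t (c, be.1)| :=
              abs_add_le _ _
            _ ≤ 2 * (S ts * ‖F t‖) := by linarith
      _ = ∑ i, |u0 i| * (2 * S ts) * ‖F t‖ :=
          Finset.sum_congr rfl fun i _ => by ring
      _ = (∑ i, |u0 i| * (2 * S ts)) * ‖F t‖ := by rw [← Finset.sum_mul]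
      _ = K * ‖F t‖ := by
          refine congrArg (· * ‖F t‖) ?_
          rw [hK, ← Finset.sum_mul]
  have hcont : ContinuousOn F (Set.Icc 0 1) := fun t _ =>
    (hF t).continuousAt.continuousWithinAt
  have hF0 : ‖F 0‖ ≤ 0 := by
    have hz : F 0 = 0 := by
      funext be
      have hγ0 : γ 0 = (((0 : Fin n → ℝ), (0 : Fin n → ℝ)) : TMpt n) := by
        rw [hγdef]
        simp
      simp only [hFdef, Pi.zero_apply, hγ0, sub_eq_zero]
      exact congrFun (congrFun (gBS_fiber_zero D δ (0 : Fin n → ℝ)) be.1) be.2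
    rw [hz]
    simp
  have hg := norm_le_gronwallBound_of_norm_deriv_right_le hcont
    (fun t _ => (hF t).hasDerivWithinAt) hF0 hbound
  have h1 : ‖F 1‖ ≤ 0 := by
    have := hg 1 (Set.mem_Icc.mpr ⟨zero_le_one, le_refl 1⟩)
    rwa [gronwallBound_ε0_δ0] at this
  have hF1 : F 1 = 0 := by
    have := norm_le_zero_iff.mp h1
    exact this
  have := congrFun hF1 (b, e)
  have hγ1 : γ 1 = (((0 : Fin n → ℝ), u0) : TMpt n) := by
    rw [hγdef]
    simp
  rw [hFdef] at this
  simp only [hγ1] at this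
  have : gBS D δ (((0 : Fin n → ℝ), u0) : TMpt n) b e
      - gS D (((0 : Fin n → ℝ), u0) : TMpt n) b e = 0 := this
  linarith

end ODE

end BergerSasaki
namespace BergerSasaki

/-- For `δ ≠ 0` (and `M` of positive dimension `2k`), the identity map
`I : (TM, g_BS) → (TM, g_S)` cannot be totally geodesic: its second fundamental form
does not vanish identically. -/
theorem identity_gBS_to_gS_not_totallyGeodesic (k : ℕ) (hk : 0 < k)
    (D : PreData (2 * k)) (hD : IsAntiParaKahler D) (δ : ℝ) (hδ : δ ≠ 0) :
    ¬ (∀ (p : TMpt (2 * k)) (a b c : Idx (2 * k)),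
        betaTM2TM (gBS D δ) (GammaT (gS D)) (fun p => p) p a b c = 0) := by
  intro H
  have HΓ := gamma_eq_of_beta D δ H
  have hn : 0 < 2 * k := by omega
  let i0 : Fin (2 * k) := ⟨0, hn⟩
  set u0 : Fin (2 * k) → ℝ := Pi.single i0 1 with hu0
  set p0 : TMpt (2 * k) := (((0 : Fin (2 * k) → ℝ), u0) : TMpt (2 * k)) with hp0
  have hw : ∀ j, wvec D p0 j = 0 := by
    intro j
    have h := gBS_eq_gS_line D δ HΓ u0 (Sum.inr j) (Sum.inr j)
    have h1 : gBS D δ p0 (Sum.inr j) (Sum.inr j)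
        = D.g p0.1 j j + δ ^ 2 * wvec D p0 j * wvec D p0 j := gBS_inr_inr D δ p0 j j
    have h2 : gS D p0 (Sum.inr j) (Sum.inr j)
        = D.g p0.1 j j + 0 ^ 2 * wvec D p0 j * wvec D p0 j := gBS_inr_inr D 0 p0 j j
    rw [hp0] at h1 h2
    rw [h1, h2] at h
    have h3 : δ ^ 2 * (wvec D p0 j * wvec D p0 j) = 0 := by
      rw [hp0]
      nlinarith [h]
    have hδ2 : δ ^ 2 ≠ 0 := pow_ne_zero 2 hδ
    exact mul_self_eq_zero.mp ((mul_eq_zero.mp h3).resolve_left hδ2)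
  set v : Fin (2 * k) → ℝ := fun m => ∑ l, D.g (0 : Fin (2 * k) → ℝ) m l * u0 l with hv
  have hvec : Matrix.vecMul v (D.phi (0 : Fin (2 * k) → ℝ)) = 0 := by
    funext j
    have h := hw j
    unfold wvec at h
    have h' : ∑ m, D.phi (0 : Fin (2 * k) → ℝ) m j * v m = 0 := h
    rw [Matrix.vecMul, Pi.zero_apply]
    rw [show v ⬝ᵥ (fun m => D.phi (0 : Fin (2 * k) → ℝ) m j)
        = ∑ m, D.phi (0 : Fin (2 * k) → ℝ) m j * v m from
      Finset.sum_congr rfl fun m _ => mul_comm _ _]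
    exact h'
  have hv0 : v = 0 := by
    have h2 := congrArg (fun w => Matrix.vecMul w (D.phi (0 : Fin (2 * k) → ℝ))) hvec
    simp only [Matrix.vecMul_vecMul, D.phi_sq (0 : Fin (2 * k) → ℝ), Matrix.vecMul_one,
      Matrix.zero_vecMul] at h2
    exact h2
  have hgu : D.g (0 : Fin (2 * k) → ℝ) *ᵥ u0 = 0 := by
    funext m
    exact congrFun hv0 m
  have hu0z : u0 = 0 := by
    have h3 := congrArg (fun w => (D.g (0 : Fin (2 * k) → ℝ))⁻¹ *ᵥ w) hgu
    simp only [Matrix.mulVec_mulVec] at h3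
    rw [Matrix.nonsing_inv_mul _ (Ne.isUnit (g_det_ne D (0 : Fin (2 * k) → ℝ))),
      Matrix.one_mulVec, Matrix.mulVec_zero] at h3
    exact h3
  have hone : u0 i0 = 1 := by
    rw [hu0]
    simp
  rw [hu0z] at hone
  simp at hone

end BergerSasaki
end
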